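/- arXiv:1911.04727 — 6 statements merged into one kernel-verified Lean document; each statement's English description precedes it below -/
import Mathlib

section
/- Let M be a bounded modular lattice and n > 1 an integer. The following are equivalent: (1) there exists a strict n-cube in M; (2) there exist a_1, …, a_n ∈ M such that for every i with 1 ≤ i ≤ n, the join a_1 ∨ ⋯ ∨ a_n is not equal to the join a_1 ∨ ⋯ ∨ â_i ∨ ⋯ ∨ a_n obtained by omitting a_i; (3) there exist a_1, …, a_n ∈ M such that for every i with 1 ≤ i ≤ n, the meet a_1 ∧ ⋯ ∧ a_n is not equal to the meet a_1 ∧ ⋯ ∧ â_i ∧ ⋯ ∧ a_n obtained by omitting a_i. -/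
/-- A strict `n`-cube in a lattice: an injective map from the powerset of `{1,…,n}`
preserving unions as joins and intersections as meets. -/
def IsStrictCube {M : Type*} [Lattice M] {n : ℕ} (f : Set (Fin n) → M) : Prop :=
  Function.Injective f ∧ (∀ s t : Set (Fin n), f (s ∪ t) = f s ⊔ f t) ∧
    (∀ s t : Set (Fin n), f (s ∩ t) = f s ⊓ f t)

/-- Key modular-lattice lemma: if `b` is a "co-independent" family below `u`, then the
map `A ↦ A.inf b ⊓ u` turns intersections of index sets into joins. -/
private theorem aux_meet_cube {M : Type*} [Lattice M] [OrderTop M] [IsModularLattice M]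
    {n : ℕ} (b : Fin n → M) (u : M)
    (hco : ∀ (S : Finset (Fin n)) (i : Fin n), i ∉ S → b i ⊔ (S.inf b ⊓ u) = u) :
    ∀ (k : ℕ) (A B : Finset (Fin n)), (B \ A).card ≤ k →
      (A.inf b ⊓ u) ⊔ (B.inf b ⊓ u) = (A ∩ B).inf b ⊓ u := by
  have hbase : ∀ A B : Finset (Fin n), B ⊆ A →
      (A.inf b ⊓ u) ⊔ (B.inf b ⊓ u) = (A ∩ B).inf b ⊓ u := by
    intro A B hBA
    rw [Finset.inter_eq_right.2 hBA]
    exact sup_eq_right.2 (inf_le_inf_right u (Finset.inf_mono hBA))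
  intro k
  induction k with
  | zero =>
    intro A B hcard
    exact hbase A B (Finset.sdiff_eq_empty_iff_subset.1
      (Finset.card_eq_zero.1 (Nat.le_zero.1 hcard)))
  | succ k ih =>
    intro A B hcard
    by_cases hBA : B ⊆ A
    · exact hbase A B hBA
    · obtain ⟨i, hiB, hiA⟩ := Finset.not_subset.1 hBA
      have hxz : (A ∪ B.erase i).inf b ⊓ u ≤ (B.erase i).inf b ⊓ u :=
        inf_le_inf_right u (Finset.inf_mono Finset.subset_union_right)
      have hBi : B.inf b ⊓ u = b i ⊓ ((B.erase i).inf b ⊓ u) := by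
        conv_lhs => rw [← Finset.insert_erase hiB]
        rw [Finset.inf_insert, inf_assoc]
      have hxbi : ((A ∪ B.erase i).inf b ⊓ u) ⊔ b i = u := by
        rw [sup_comm]
        exact hco (A ∪ B.erase i) i (by simp [hiA])
      have h2 : ((A ∪ B.erase i).inf b ⊓ u) ⊔ (B.inf b ⊓ u) = (B.erase i).inf b ⊓ u := by
        rw [hBi, ← sup_inf_assoc_of_le (b i) hxz, hxbi, inf_eq_right.2 (inf_le_right)]
      have hxA : (A ∪ B.erase i).inf b ⊓ u ≤ A.inf b ⊓ u :=
        inf_le_inf_right u (Finset.inf_mono Finset.subset_union_left)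
      have hcard' : ((B.erase i) \ A).card ≤ k := by
        have hlt : ((B.erase i) \ A).card < (B \ A).card := by
          apply Finset.card_lt_card
          refine ⟨Finset.sdiff_subset_sdiff (Finset.erase_subset _ _) le_rfl, ?_⟩
          intro hsub
          have := hsub (Finset.mem_sdiff.2 ⟨hiB, hiA⟩)
          simp at this
        omega
      have hABi : A ∩ B.erase i = A ∩ B := by
        ext j
        simp only [Finset.mem_inter, Finset.mem_erase]
        constructor
        · rintro ⟨hjA, _, hjB⟩; exact ⟨hjA, hjB⟩
        · rintro ⟨hjA, hjB⟩
          exact ⟨hjA, fun h => hiA (h ▸ hjA), hjB⟩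
      calc (A.inf b ⊓ u) ⊔ (B.inf b ⊓ u)
          = (A.inf b ⊓ u) ⊔ (((A ∪ B.erase i).inf b ⊓ u) ⊔ (B.inf b ⊓ u)) := by
            rw [← sup_assoc, sup_eq_left.2 hxA]
        _ = (A.inf b ⊓ u) ⊔ ((B.erase i).inf b ⊓ u) := by rw [h2]
        _ = (A ∩ B.erase i).inf b ⊓ u := ih A (B.erase i) hcard'
        _ = (A ∩ B).inf b ⊓ u := by rw [hABi]

/-- The join formulation, for any bounded modular lattice. -/
private theorem cube_iff_join {M : Type*} [Lattice M] [BoundedOrder M] [IsModularLattice M]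
    {n : ℕ} :
    (∃ f : Set (Fin n) → M, IsStrictCube f) ↔
      ∃ a : Fin n → M, ∀ i : Fin n,
        Finset.univ.sup a ≠ (Finset.univ.erase i).sup a := by
  constructor
  · rintro ⟨f, hinj, hsup, hinf⟩
    refine ⟨fun i => f {i}, fun i hiEq => ?_⟩
    have key : ∀ S : Finset (Fin n), f (↑S) = f ∅ ⊔ S.sup (fun i => f {i}) := by
      intro S
      refine Finset.induction_on S (by simp) ?_
      intro j S hjS ih
      rw [Finset.coe_insert, Set.insert_eq, hsup, ih, Finset.sup_insert, sup_left_comm]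
    have h1 : f (↑(Finset.univ : Finset (Fin n))) = f (↑(Finset.univ.erase i)) := by
      rw [key, key, hiEq]
    have h2 := hinj h1
    rw [Finset.coe_univ, Finset.coe_erase, Finset.coe_univ] at h2
    have : i ∈ (Set.univ \ {i} : Set (Fin n)) := h2 ▸ Set.mem_univ i
    simp at this
  · rintro ⟨a, ha⟩
    classical
    set u : M := Finset.univ.sup a with hu
    set b : Fin n → M := fun i => (Finset.univ.erase i).sup a with hb
    have hbu : ∀ i, b i ≤ u := fun i => Finset.sup_mono (Finset.erase_subset _ _)
    have hau : ∀ i, a i ≤ u := fun i => Finset.le_sup (Finset.mem_univ i)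
    have hab : ∀ i j, i ≠ j → a i ≤ b j := fun i j hij =>
      Finset.le_sup (Finset.mem_erase.2 ⟨hij, Finset.mem_univ i⟩)
    have hiu : ∀ i, a i ⊔ b i = u := by
      intro i
      rw [hu, hb]
      conv_rhs => rw [← Finset.insert_erase (Finset.mem_univ i)]
      rw [Finset.sup_insert]
    have hco : ∀ (S : Finset (Fin n)) (i : Fin n), i ∉ S → b i ⊔ (S.inf b ⊓ u) = u := by
      intro S i hiS
      have hai : a i ≤ S.inf b ⊓ u :=
        le_inf (Finset.le_inf fun j hj => hab i j (fun e => hiS (e ▸ hj))) (hau i)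
      refine le_antisymm (sup_le (hbu i) inf_le_right) ?_
      calc u = a i ⊔ b i := (hiu i).symm
        _ ≤ b i ⊔ (S.inf b ⊓ u) := sup_le (hai.trans le_sup_right) le_sup_left
    have K := aux_meet_cube b u hco
    set F : Set (Fin n) → Finset (Fin n) := fun s => Finset.univ.filter (· ∈ s) with hF
    have hFmem : ∀ (s : Set (Fin n)) (i : Fin n), i ∈ F s ↔ i ∈ s := by
      intro s i; simp [hF]
    have hFinter : ∀ s t : Set (Fin n), F (s ∩ t) = F s ∩ F t := by
      intro s t; ext j; simp [hFmem]
    have hFunion : ∀ s t : Set (Fin n), F (s ∪ t) = F s ∪ F t := by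
      intro s t; ext j; simp [hFmem]
    have hFinj : ∀ s t : Set (Fin n), F s = F t → s = t := by
      intro s t h
      ext j
      rw [← hFmem s j, h, hFmem]
    refine ⟨fun s => (F sᶜ).inf b ⊓ u, ?_, ?_, ?_⟩
    · -- injectivity
      have main : ∀ s t : Set (Fin n), (F sᶜ).inf b ⊓ u = (F tᶜ).inf b ⊓ u →
          ∀ i, i ∈ s → i ∉ t → False := by
        intro s t hst i his hit
        have h1 : (F tᶜ).inf b ⊓ u ≤ b i :=
          inf_le_left.trans (Finset.inf_le ((hFmem tᶜ i).2 hit))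
        have h2 : ((F sᶜ).inf b ⊓ u) ⊔ b i = u := by
          refine le_antisymm (sup_le inf_le_right (hbu i)) ?_
          rw [hu]
          refine Finset.sup_le fun j _ => ?_
          by_cases hji : j = i
          · subst hji
            refine le_trans (le_inf ?_ (hau j)) le_sup_left
            refine Finset.le_inf fun k hk => ?_
            have hks : k ∈ (sᶜ : Set (Fin n)) := (hFmem _ k).1 hk
            exact hab j k (fun e => hks (e ▸ his))
          · exact (hab j i hji).trans le_sup_right
        have h3 : u = b i := by
          rw [← h2, hst, sup_eq_right.2 h1]
        exact ha i h3
      intro s t hst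
      ext j
      constructor
      · intro hjs
        by_contra hjt
        exact main s t hst j hjs hjt
      · intro hjt
        by_contra hjs
        exact main t s hst.symm j hjt hjs
    · -- joins
      intro s t
      show (F (s ∪ t)ᶜ).inf b ⊓ u = ((F sᶜ).inf b ⊓ u) ⊔ ((F tᶜ).inf b ⊓ u)
      rw [Set.compl_union, hFinter, K ((F tᶜ) \ (F sᶜ)).card (F sᶜ) (F tᶜ) le_rfl]
    · -- meets
      intro s t
      show (F (s ∩ t)ᶜ).inf b ⊓ u = ((F sᶜ).inf b ⊓ u) ⊓ ((F tᶜ).inf b ⊓ u)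
      rw [Set.compl_inter, hFunion, Finset.inf_union, inf_inf_distrib_right]

/-- Transfer of strict cubes to the dual lattice. -/
private theorem cube_dual_iff {M : Type*} [Lattice M] {n : ℕ} :
    (∃ f : Set (Fin n) → M, IsStrictCube f) ↔
      ∃ g : Set (Fin n) → Mᵒᵈ, IsStrictCube g := by
  constructor
  · rintro ⟨f, hinj, hsup, hinf⟩
    refine ⟨fun s => OrderDual.toDual (f sᶜ), ?_, ?_, ?_⟩
    · intro s t hst
      have := hinj (OrderDual.toDual.injective hst)
      exact compl_injective this
    · intro s t
      show OrderDual.toDual (f (s ∪ t)ᶜ) = OrderDual.toDual (f sᶜ ⊓ f tᶜ)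
      rw [Set.compl_union, hinf]
    · intro s t
      show OrderDual.toDual (f (s ∩ t)ᶜ) = OrderDual.toDual (f sᶜ ⊔ f tᶜ)
      rw [Set.compl_inter, hsup]
  · rintro ⟨g, hinj, hsup, hinf⟩
    refine ⟨fun s => OrderDual.ofDual (g sᶜ), ?_, ?_, ?_⟩
    · intro s t hst
      have := hinj (OrderDual.ofDual.injective hst)
      exact compl_injective this
    · intro s t
      show OrderDual.ofDual (g (s ∪ t)ᶜ) = OrderDual.ofDual (g sᶜ ⊓ g tᶜ)
      rw [Set.compl_union, hinf]
    · intro s t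
      show OrderDual.ofDual (g (s ∩ t)ᶜ) = OrderDual.ofDual (g sᶜ ⊔ g tᶜ)
      rw [Set.compl_inter, hsup]

/-- In a bounded modular lattice, for `n > 1`, the existence of a strict `n`-cube is
equivalent to the existence of `a₁, …, aₙ` whose join strictly drops when any one
element is omitted, and also to the dual statement for meets. -/
theorem strict_cube_iff_join_irredundant_and_iff_meet_irredundant
    {M : Type*} [Lattice M] [BoundedOrder M] [IsModularLattice M]
    {n : ℕ} (hn : 1 < n) :
    ((∃ f : Set (Fin n) → M, IsStrictCube f) ↔
      ∃ a : Fin n → M, ∀ i : Fin n,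
        Finset.univ.sup a ≠ (Finset.univ.erase i).sup a) ∧
    ((∃ f : Set (Fin n) → M, IsStrictCube f) ↔
      ∃ a : Fin n → M, ∀ i : Fin n,
        Finset.univ.inf a ≠ (Finset.univ.erase i).inf a) := by
  refine ⟨cube_iff_join, ?_⟩
  rw [cube_dual_iff, cube_iff_join (M := Mᵒᵈ)]
  constructor
  · rintro ⟨a, ha⟩
    refine ⟨OrderDual.ofDual ∘ a, fun i hEq => ha i ?_⟩
    have h1 := congrArg OrderDual.toDual hEq
    rw [Finset.toDual_inf, Finset.toDual_inf] at h1
    exact h1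
  · rintro ⟨a, ha⟩
    refine ⟨OrderDual.toDual ∘ a, fun i hEq => ha i ?_⟩
    have h1 := congrArg OrderDual.ofDual hEq
    rw [Finset.ofDual_sup, Finset.ofDual_sup] at h1
    convert h1 using 2 <;> ext j <;> simp
end

section
/- Let K be a field, n ≥ 1, and let O_1, …, O_n be pairwise incomparable valuation subrings of K (for i ≠ j, neither O_i ⊆ O_j nor O_j ⊆ O_i). Let R = O_1 ∩ ⋯ ∩ O_n. Then the lattice of R-submodules of K has reduced rank exactly n: it contains a strict n-cube but contains no strict (n+1)-cube. -/
open Finset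

namespace RRV

variable {K : Type*} [Field K]

section Helpers

variable {Γ₀ : Type*} [LinearOrderedCommGroupWithZero Γ₀] (v : Valuation K Γ₀)

theorem val_pow_sub_one_lt {x : K} (hx : v x = 1) (h1 : v (x - 1) < 1) :
    ∀ k : ℕ, v (x ^ k - 1) < 1 := by
  intro k
  induction k with
  | zero => simpa using (zero_lt_one : (0 : Γ₀) < 1)
  | succ k ih =>
    have hE : x ^ (k + 1) - 1 = x ^ k * (x - 1) + (x ^ k - 1) := by ring
    rw [hE]
    refine lt_of_le_of_lt (v.map_add _ _) (max_lt ?_ ih)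
    rw [v.map_mul, v.map_pow, hx, one_pow, one_mul]
    exact h1

theorem val_zpow_sub_one_lt {x : K} (hx : v x = 1) (h1 : v (x - 1) < 1) :
    ∀ k : ℤ, v (x ^ k - 1) < 1 := by
  have hx0 : x ≠ 0 := by
    intro h
    rw [h, map_zero] at hx
    exact zero_ne_one hx
  intro k
  obtain ⟨m, rfl | rfl⟩ := k.eq_nat_or_neg
  · rw [zpow_natCast]
    exact val_pow_sub_one_lt v hx h1 m
  · have hcan : x ^ (-(m : ℤ)) * (x ^ m - 1) = 1 - x ^ (-(m : ℤ)) := by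
      rw [mul_sub, mul_one, zpow_neg, zpow_natCast, inv_mul_cancel₀ (pow_ne_zero _ hx0)]
    have hE : x ^ (-(m : ℤ)) - 1 = -(x ^ (-(m : ℤ)) * (x ^ m - 1)) := by
      rw [hcan, neg_sub]
    rw [hE, v.map_neg, v.map_mul, map_zpow₀, hx, one_zpow, one_mul]
    exact val_pow_sub_one_lt v hx h1 m

theorem map_sum_eq_of_lt' {ι : Type*} {s : Finset ι} {f : ι → K} {j : ι}
    (hj : j ∈ s) (h0 : v (f j) ≠ 0) (hf : ∀ i ∈ s, i ≠ j → v (f i) < v (f j)) :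
    v (∑ i ∈ s, f i) = v (f j) := by
  classical
  rw [← Finset.add_sum_erase s f hj]
  refine v.map_add_eq_of_lt_left (v.map_sum_lt h0 ?_)
  intro i hi
  exact hf i (Finset.mem_of_mem_erase hi) (Finset.ne_of_mem_erase hi)

end Helpers

section Places

variable {n : ℕ} (O : Fin n → ValuationSubring K)

theorem nat_mem' (j : Fin n) (a : ℕ) : ((a : K)) ∈ O j := by
  rw [← (O j).mem_toSubring]
  exact natCast_mem (O j).toSubring a

theorem int_mem' (j : Fin n) (a : ℤ) : ((a : K)) ∈ O j := by
  rw [← (O j).mem_toSubring]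
  exact intCast_mem (O j).toSubring a

theorem exists_good_prime (x : K) :
    ∃ p : ℕ, p.Prime ∧ ∀ j : Fin n,
      ¬((O j).valuation (p : K) < 1) ∧
      ¬((O j).valuation x = 1 ∧ (O j).valuation (x - 1) = 1 ∧
        (O j).valuation (x ^ p - 1) < 1) := by
  have hA : ∀ j : Fin n, ∀ p q : ℕ, p.Prime → q.Prime →
      (O j).valuation (p : K) < 1 → (O j).valuation (q : K) < 1 → p = q := by
    intro j p q hp hq hvp hvq
    by_contra hne
    have hco : IsCoprime (p : ℤ) (q : ℤ) := by
      rw [Int.isCoprime_iff_gcd_eq_one]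
      exact_mod_cast (Nat.coprime_primes hp hq).2 hne
    obtain ⟨a, b, hab⟩ := hco
    have hcast : (a : K) * (p : K) + (b : K) * (q : K) = 1 := by
      have := congrArg (fun z : ℤ => (z : K)) hab
      push_cast at this
      exact this
    have hv1 : (O j).valuation (1 : K) < 1 := by
      rw [← hcast]
      refine lt_of_le_of_lt (Valuation.map_add _ _ _) (max_lt ?_ ?_)
      · rw [Valuation.map_mul]
        have ha1 : (O j).valuation (a : K) ≤ 1 :=
          ((O j).valuation_le_one_iff _).2 (int_mem' O j a)
        calc (O j).valuation (a : K) * (O j).valuation (p : K)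
            ≤ 1 * (O j).valuation (p : K) := mul_le_mul_left ha1 _
          _ = (O j).valuation (p : K) := one_mul _
          _ < 1 := hvp
      · rw [Valuation.map_mul]
        have hb1 : (O j).valuation (b : K) ≤ 1 :=
          ((O j).valuation_le_one_iff _).2 (int_mem' O j b)
        calc (O j).valuation (b : K) * (O j).valuation (q : K)
            ≤ 1 * (O j).valuation (q : K) := mul_le_mul_left hb1 _
          _ = (O j).valuation (q : K) := one_mul _
          _ < 1 := hvq
    rw [Valuation.map_one] at hv1
    exact lt_irrefl _ hv1
  have hB : ∀ j : Fin n, ∀ p q : ℕ, p.Prime → q.Prime →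
      ((O j).valuation x = 1 ∧ (O j).valuation (x - 1) = 1 ∧
        (O j).valuation (x ^ p - 1) < 1) →
      ((O j).valuation x = 1 ∧ (O j).valuation (x - 1) = 1 ∧
        (O j).valuation (x ^ q - 1) < 1) → p = q := by
    intro j p q hp hq hyp1 hyp2
    obtain ⟨hx1, hxm1, hxp⟩ := hyp1
    obtain ⟨-, -, hxq⟩ := hyp2
    by_contra hne
    have hx0 : x ≠ 0 := by
      intro h
      rw [h, map_zero] at hx1
      exact zero_ne_one hx1
    have hco : IsCoprime (p : ℤ) (q : ℤ) := by
      rw [Int.isCoprime_iff_gcd_eq_one]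
      exact_mod_cast (Nat.coprime_primes hp hq).2 hne
    obtain ⟨a, b, hab⟩ := hco
    have hvxp : (O j).valuation (x ^ (p : ℤ)) = 1 := by
      rw [map_zpow₀, hx1, one_zpow]
    have hvxq : (O j).valuation (x ^ (q : ℤ)) = 1 := by
      rw [map_zpow₀, hx1, one_zpow]
    have hp' : ∀ a : ℤ, (O j).valuation ((x ^ (p : ℤ)) ^ a - 1) < 1 := by
      intro a
      refine val_zpow_sub_one_lt _ hvxp ?_ a
      rw [zpow_natCast]
      exact hxp
    have hq' : ∀ a : ℤ, (O j).valuation ((x ^ (q : ℤ)) ^ a - 1) < 1 := by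
      intro a
      refine val_zpow_sub_one_lt _ hvxq ?_ a
      rw [zpow_natCast]
      exact hxq
    have hyz : (x ^ (p : ℤ)) ^ a * ((x ^ (q : ℤ)) ^ b) = x := by
      rw [← zpow_mul, ← zpow_mul, ← zpow_add₀ hx0]
      rw [show (p : ℤ) * a + (q : ℤ) * b = 1 by linarith [hab]]
      exact zpow_one x
    have hE : x - 1 = (x ^ (p : ℤ)) ^ a * ((x ^ (q : ℤ)) ^ b - 1) + ((x ^ (p : ℤ)) ^ a - 1) := by
      rw [mul_sub, hyz, mul_one]
      ring
    have hlt : (O j).valuation (x - 1) < 1 := by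
      rw [hE]
      refine lt_of_le_of_lt (Valuation.map_add _ _ _) (max_lt ?_ (hp' a))
      rw [Valuation.map_mul, map_zpow₀, hvxp, one_zpow, one_mul]
      exact hq' b
    rw [hxm1] at hlt
    exact lt_irrefl _ hlt
  -- now pick a prime avoiding the (finitely many) bad primes
  let badA : Fin n → Set ℕ := fun j => {p | p.Prime ∧ (O j).valuation (p : K) < 1}
  let badB : Fin n → Set ℕ := fun j => {p | p.Prime ∧ ((O j).valuation x = 1 ∧
      (O j).valuation (x - 1) = 1 ∧ (O j).valuation (x ^ p - 1) < 1)}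
  have hpick : ∀ S : Set ℕ, ∃ m : ℕ, S.Nonempty → m ∈ S := by
    intro S
    by_cases h : S.Nonempty
    · exact ⟨h.choose, fun _ => h.choose_spec⟩
    · exact ⟨0, fun hh => absurd hh h⟩
  choose pick hpickspec using hpick
  let killers : Finset ℕ :=
    (Finset.univ.image fun j : Fin n => pick (badA j)) ∪
      (Finset.univ.image fun j : Fin n => pick (badB j))
  obtain ⟨p, hlarge, hp⟩ := Nat.exists_infinite_primes (killers.sup id + 1)
  refine ⟨p, hp, fun j => ⟨?_, ?_⟩⟩
  · intro hbad
    have hne : (badA j).Nonempty := ⟨p, hp, hbad⟩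
    have hspec : pick (badA j) ∈ badA j := hpickspec _ hne
    have hpe : p = pick (badA j) := hA j p _ hp hspec.1 hbad hspec.2
    have hk : pick (badA j) ∈ killers := by
      apply Finset.mem_union_left
      exact Finset.mem_image.2 ⟨j, Finset.mem_univ j, rfl⟩
    have := Finset.le_sup (f := id) hk
    simp only [id] at this
    omega
  · intro hbad
    have hne : (badB j).Nonempty := ⟨p, hp, hbad⟩
    have hspec : pick (badB j) ∈ badB j := hpickspec _ hne
    have hpe : p = pick (badB j) := hB j p _ hp hspec.1 hbad hspec.2
    have hk : pick (badB j) ∈ killers := by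
      apply Finset.mem_union_right
      exact Finset.mem_image.2 ⟨j, Finset.mem_univ j, rfl⟩
    have := Finset.le_sup (f := id) hk
    simp only [id] at this
    omega

theorem exists_unitizer (hn : 0 < n) (x : K) :
    ∃ s : K, s ≠ 0 ∧ ∀ j,
      ((O j).valuation x ≤ 1 → (O j).valuation s = 1) ∧
      (1 < (O j).valuation x →
        (O j).valuation s < 1 ∧ (O j).valuation (s * x) ≤ 1) := by
  obtain ⟨p, hp, hgood⟩ := exists_good_prime O x
  have hp2 := hp.two_le
  set g : K := ∑ i ∈ range p, x ^ i with hg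
  have hkey : ∀ j, ((O j).valuation x ≤ 1 → (O j).valuation g = 1) ∧
      (1 < (O j).valuation x → (O j).valuation g = ((O j).valuation x) ^ (p - 1)) := by
    intro j
    constructor
    · intro hx
      rcases lt_or_eq_of_le hx with hx | hx
      · have hlt : (O j).valuation (g - 1) < 1 := by
          have hE : g - 1 = ∑ i ∈ Ico 1 p, x ^ i := by
            rw [hg, range_eq_Ico, Finset.sum_eq_sum_Ico_succ_bot hp.pos, pow_zero]
            ring
          rw [hE]
          refine Valuation.map_sum_lt _ one_ne_zero ?_
          intro i hi
          rw [Valuation.map_pow]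
          refine pow_lt_one₀ zero_le' hx ?_
          have := (Finset.mem_Ico.1 hi).1
          omega
        have h2 := (O j).valuation.map_eq_of_sub_lt (x := (1 : K)) (y := g)
          (by rwa [Valuation.map_one])
        rwa [Valuation.map_one] at h2
      · have hle : (O j).valuation (x - 1) ≤ 1 := by
          refine le_trans ((O j).valuation.map_sub _ _) ?_
          simp [hx, Valuation.map_one]
        rcases lt_or_eq_of_le hle with hm | hm
        · have hsum : g - (p : K) = ∑ i ∈ range p, (x ^ i - 1) := by
            rw [Finset.sum_sub_distrib, Finset.sum_const, card_range, nsmul_eq_mul, mul_one, hg]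
          have hcast : (O j).valuation ((p : K)) = 1 := by
            refine le_antisymm (((O j).valuation_le_one_iff _).2 (nat_mem' O j p)) ?_
            exact not_lt.1 (hgood j).1
          have hlt : (O j).valuation (g - (p : K)) < 1 := by
            rw [hsum]
            refine Valuation.map_sum_lt _ one_ne_zero ?_
            intro i _
            exact val_pow_sub_one_lt _ hx hm i
          have h2 := (O j).valuation.map_eq_of_sub_lt (x := (p : K)) (y := g)
            (by rwa [hcast])
          rw [h2, hcast]
        · have hgeo : g * (x - 1) = x ^ p - 1 := geom_sum_mul x p
          have hxp : (O j).valuation (x ^ p - 1) = 1 := by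
            refine le_antisymm ?_ ?_
            · refine le_trans ((O j).valuation.map_sub _ _) ?_
              simp [Valuation.map_pow, hx, Valuation.map_one]
            · refine not_lt.1 fun hcon => ?_
              exact (hgood j).2 ⟨hx, hm, hcon⟩
          have h2 := congrArg (O j).valuation hgeo
          rw [Valuation.map_mul, hm, mul_one, hxp] at h2
          exact h2
    · intro hx
      have hxne : (O j).valuation x ≠ 0 := ne_of_gt (zero_lt_one.trans hx)
      have h2 : (O j).valuation g = (O j).valuation (x ^ (p - 1)) := by
        refine map_sum_eq_of_lt' (O j).valuation (j := p - 1) ?_ ?_ ?_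
        · rw [mem_range]; omega
        · rw [Valuation.map_pow]; exact pow_ne_zero _ hxne
        · intro i hi1 hi2
          rw [Valuation.map_pow, Valuation.map_pow]
          refine pow_lt_pow_right₀ hx ?_
          rw [mem_range] at hi1
          omega
      rw [h2, Valuation.map_pow]
  have hg0 : g ≠ 0 := by
    intro h0
    rcases le_or_gt ((O ⟨0, hn⟩).valuation x) 1 with h | h
    · have := (hkey ⟨0, hn⟩).1 h
      rw [h0, map_zero] at this
      exact zero_ne_one this
    · have := (hkey ⟨0, hn⟩).2 h
      rw [h0, map_zero] at this
      exact (pow_ne_zero _ (ne_of_gt (zero_lt_one.trans h))) this.symm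
  refine ⟨g⁻¹, inv_ne_zero hg0, fun j => ⟨?_, ?_⟩⟩
  · intro hx
    rw [map_inv₀, (hkey j).1 hx, inv_one]
  · intro hx
    have hxne : (O j).valuation x ≠ 0 := ne_of_gt (zero_lt_one.trans hx)
    have hkv := (hkey j).2 hx
    constructor
    · rw [map_inv₀, hkv]
      have h1 : 1 < ((O j).valuation x) ^ (p - 1) := one_lt_pow₀ hx (by omega)
      rw [inv_lt_one₀ (zero_lt_one.trans h1)]
      exact h1
    · rw [Valuation.map_mul, map_inv₀, hkv]
      have hle2 : (O j).valuation x ≤ ((O j).valuation x) ^ (p - 1) := by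
        conv_lhs => rw [← pow_one ((O j).valuation x)]
        exact pow_le_pow_right₀ hx.le (by omega)
      calc (((O j).valuation x) ^ (p - 1))⁻¹ * (O j).valuation x
          ≤ (((O j).valuation x) ^ (p - 1))⁻¹ * ((O j).valuation x) ^ (p - 1) :=
            mul_le_mul_right hle2 _
        _ = 1 := inv_mul_cancel₀ (pow_ne_zero _ hxne)

theorem exists_uab (hinc : ∀ i j : Fin n, i ≠ j → ¬((O i : Set K) ⊆ (O j : Set K)))
    {a b : Fin n} (hab : a ≠ b) :
    ∃ u : K, u ≠ 0 ∧ (O a).valuation u < 1 ∧ 1 < (O b).valuation u := by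
  obtain ⟨y, hyb, hya⟩ := Set.not_subset.1 (hinc b a hab.symm)
  obtain ⟨z, hza, hzb⟩ := Set.not_subset.1 (hinc a b hab)
  have hy0 : y ≠ 0 := fun h => hya (h ▸ (O a).zero_mem)
  have hz0 : z ≠ 0 := fun h => hzb (h ▸ (O b).zero_mem)
  have hvya : 1 < (O a).valuation y := not_le.1 fun h => hya (((O a).valuation_le_one_iff _).1 h)
  have hvzb : 1 < (O b).valuation z := not_le.1 fun h => hzb (((O b).valuation_le_one_iff _).1 h)
  have hvyb : (O b).valuation y ≤ 1 := ((O b).valuation_le_one_iff _).2 hyb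
  have hvza : (O a).valuation z ≤ 1 := ((O a).valuation_le_one_iff _).2 hza
  refine ⟨z * y⁻¹, mul_ne_zero hz0 (inv_ne_zero hy0), ?_, ?_⟩
  · rw [Valuation.map_mul, map_inv₀]
    calc (O a).valuation z * ((O a).valuation y)⁻¹
        ≤ 1 * ((O a).valuation y)⁻¹ := mul_le_mul_left hvza _
      _ = ((O a).valuation y)⁻¹ := one_mul _
      _ < 1 := by
          rw [inv_lt_one₀ (zero_lt_one.trans hvya)]
          exact hvya
  · rw [Valuation.map_mul, map_inv₀]
    have h1 : 1 ≤ ((O b).valuation y)⁻¹ := by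
      rw [one_le_inv₀ (zero_lt_iff.2 ((Valuation.ne_zero_iff _).2 hy0))]
      exact hvyb
    calc (1 : _) < (O b).valuation z := hvzb
      _ = (O b).valuation z * 1 := (mul_one _).symm
      _ ≤ (O b).valuation z * ((O b).valuation y)⁻¹ := mul_le_mul_right h1 _

theorem exists_Y (hinc : ∀ i j : Fin n, i ≠ j → ¬((O i : Set K) ⊆ (O j : Set K)))
    (hn : 0 < n) (k : Fin n) :
    ∃ Y : K, (O k).valuation Y = 1 ∧ ∀ j, j ≠ k → (O j).valuation Y < 1 := by
  have hA : ∀ a : Fin n, ∃ A : K,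
      (O k).valuation A = 1 ∧ (∀ j, (O j).valuation A ≤ 1) ∧
        (a ≠ k → (O a).valuation A < 1) := by
    intro a
    by_cases ha : a = k
    · exact ⟨1, by simp, fun j => by simp, fun h => absurd ha h⟩
    · obtain ⟨u, hu0, hua, hub⟩ := exists_uab O hinc (show a ≠ k from ha)
      obtain ⟨s, hs0, hs⟩ := exists_unitizer O hn u⁻¹
      have hinva : 1 < (O a).valuation u⁻¹ := by
        rw [map_inv₀, one_lt_inv₀ (zero_lt_iff.2 ((Valuation.ne_zero_iff _).2 hu0))]
        exact hua
      have hinvk : (O k).valuation u⁻¹ ≤ 1 := by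
        rw [map_inv₀]
        refine le_of_lt ?_
        rw [inv_lt_one₀ (zero_lt_one.trans hub)]
        exact hub
      refine ⟨s, (hs k).1 hinvk, fun j => ?_, fun _ => ((hs a).2 hinva).1⟩
      rcases le_or_gt ((O j).valuation u⁻¹) 1 with h | h
      · exact le_of_eq ((hs j).1 h)
      · exact le_of_lt ((hs j).2 h).1
  choose A hA1 hA2 hA3 using hA
  refine ⟨∏ a ∈ univ.erase k, A a, ?_, ?_⟩
  · rw [map_prod]
    exact Finset.prod_eq_one fun a _ => hA1 a
  · intro j hj
    rw [map_prod]
    have hjmem : j ∈ univ.erase k := mem_erase.2 ⟨hj, mem_univ j⟩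
    rw [← Finset.mul_prod_erase _ _ hjmem]
    calc (O j).valuation (A j) * ∏ a ∈ (univ.erase k).erase j, (O j).valuation (A a)
        ≤ (O j).valuation (A j) * 1 :=
          mul_le_mul_right (Finset.prod_le_one' fun a _ => hA2 a j) _
      _ = (O j).valuation (A j) := mul_one _
      _ < 1 := hA3 j hj

theorem exists_S1 (hn : 0 < n) {i : Fin n} {c : K} (hc : (O i).valuation c ≤ 1) :
    ∃ s : K, (∀ j, (O j).valuation s ≤ 1) ∧ (O i).valuation s = 1 ∧
      ∀ j, (O j).valuation (s * c) ≤ 1 := by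
  obtain ⟨s, hs0, hs⟩ := exists_unitizer O hn c
  refine ⟨s, fun j => ?_, (hs i).1 hc, fun j => ?_⟩
  · rcases le_or_gt ((O j).valuation c) 1 with h | h
    · exact le_of_eq ((hs j).1 h)
    · exact le_of_lt ((hs j).2 h).1
  · rcases le_or_gt ((O j).valuation c) 1 with h | h
    · rw [Valuation.map_mul, (hs j).1 h, one_mul]
      exact h
    · exact ((hs j).2 h).2

variable (R : Subring K)

theorem memR_iff (hR : (R : Set K) = ⋂ i, (O i : Set K)) (z : K) :
    z ∈ R ↔ ∀ j, (O j).valuation z ≤ 1 := by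
  have h1 : z ∈ R ↔ z ∈ (R : Set K) := Iff.rfl
  rw [h1, hR, Set.mem_iInter]
  refine forall_congr' fun j => ?_
  rw [SetLike.mem_coe]
  exact ((O j).valuation_le_one_iff z).symm

theorem mem_of_forall_sat (hinc : ∀ i j : Fin n, i ≠ j → ¬((O i : Set K) ⊆ (O j : Set K)))
    (hR : (R : Set K) = ⋂ i, (O i : Set K)) (hn : 0 < n) {N : Submodule R K} {x : K}
    (h : ∀ i : Fin n, ∃ s : K, s ∈ R ∧ (O i).valuation s = 1 ∧ s * x ∈ N) : x ∈ N := by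
  choose s hsR hsv hsN using h
  choose Y hY1 hY2 using fun k => exists_Y O hinc hn k
  have hYR : ∀ i, Y i ∈ R := by
    intro i
    rw [memR_iff O R hR]
    intro j
    rcases eq_or_ne j i with rfl | hne
    · exact le_of_eq (hY1 j)
    · exact le_of_lt (hY2 i j hne)
  set σ : K := ∑ i, s i * Y i with hσ
  have hσv : ∀ j, (O j).valuation σ = 1 := by
    intro j
    have hterm : (O j).valuation (s j * Y j) = 1 := by
      rw [Valuation.map_mul, hsv j, hY1 j, one_mul]
    have h2 := map_sum_eq_of_lt' (O j).valuation (s := univ) (f := fun i => s i * Y i)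
      (mem_univ j) (by rw [hterm]; exact one_ne_zero) ?_
    · rw [hσ, h2, hterm]
    · intro i _ hij
      rw [hterm, Valuation.map_mul]
      have h1 : (O j).valuation (s i) ≤ 1 := (memR_iff O R hR _).1 (hsR i) j
      calc (O j).valuation (s i) * (O j).valuation (Y i)
          ≤ 1 * (O j).valuation (Y i) := mul_le_mul_left h1 _
        _ = (O j).valuation (Y i) := one_mul _
        _ < 1 := hY2 i j hij.symm
  have hσ0 : σ ≠ 0 := by
    intro h0
    have := hσv ⟨0, hn⟩
    rw [h0, map_zero] at this
    exact zero_ne_one this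
  have hσinvR : σ⁻¹ ∈ R := by
    rw [memR_iff O R hR]
    intro j
    rw [map_inv₀, hσv j, inv_one]
  have hσx : σ * x ∈ N := by
    rw [hσ, Finset.sum_mul]
    refine Submodule.sum_mem N fun i _ => ?_
    have hE : s i * Y i * x = (⟨Y i, hYR i⟩ : R) • (s i * x) := by
      show _ = Y i * (s i * x)
      ring
    rw [hE]
    exact N.smul_mem _ (hsN i)
  have hE : x = (⟨σ⁻¹, hσinvR⟩ : R) • (σ * x) := by
    show x = σ⁻¹ * (σ * x)
    field_simp [hσ0]
  rw [hE]
  exact N.smul_mem _ hσx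

theorem no_big_cube (hinc : ∀ i j : Fin n, i ≠ j → ¬((O i : Set K) ⊆ (O j : Set K)))
    (hR : (R : Set K) = ⋂ i, (O i : Set K)) (hn : 0 < n) :
    ¬∃ f : Set (Fin (n + 1)) → Submodule R K, IsStrictCube f := by
  rintro ⟨f, finj, fsup, finf⟩
  have hmono : ∀ s t : Set (Fin (n + 1)), s ⊆ t → f s ≤ f t := by
    intro s t hst
    have h1 := fsup s t
    rw [Set.union_eq_self_of_subset_left hst] at h1
    rw [h1]
    exact le_sup_left
  have hx : ∀ d : Fin (n + 1), ∃ y : K, y ∈ f {d} ∧ y ∉ f ∅ := by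
    intro d
    have hne : f ∅ ≠ f {d} := fun h => (Set.singleton_ne_empty d) (finj h).symm
    obtain ⟨y, h1, h2⟩ := SetLike.exists_of_lt
      (lt_of_le_of_ne (hmono _ _ (Set.empty_subset _)) hne)
    exact ⟨y, h1, h2⟩
  choose x hx1 hx2 using hx
  have hhi : ∀ d, ∃ i : Fin n,
      ¬∃ s : K, s ∈ R ∧ (O i).valuation s = 1 ∧ s * x d ∈ f ∅ := by
    intro d
    by_contra hcon
    push_neg at hcon
    exact hx2 d (mem_of_forall_sat O R hinc hR hn hcon)
  choose I hI using hhi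
  have hcard : Fintype.card (Fin n) < Fintype.card (Fin (n + 1)) := by simp
  obtain ⟨d, e, hde, hIde⟩ := Fintype.exists_ne_map_eq_of_card_lt I hcard
  have key : ∀ d e : Fin (n + 1), d ≠ e → I d = I e →
      (O (I d)).valuation (x e) ≤ (O (I d)).valuation (x d) → False := by
    intro d e hde hIe hle
    have hxd0 : x d ≠ 0 := fun h0 => hx2 d (h0 ▸ (f ∅).zero_mem)
    have hvxd : (O (I d)).valuation (x d) ≠ 0 := (Valuation.ne_zero_iff _).2 hxd0
    have hcle : (O (I d)).valuation (x e / x d) ≤ 1 := by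
      rw [map_div₀, div_le_one₀ (zero_lt_iff.2 hvxd)]
      exact hle
    obtain ⟨s, hsall, hsv, hsc⟩ := exists_S1 O hn hcle
    have hsR' : s ∈ R := (memR_iff O R hR s).2 hsall
    have hscR : s * (x e / x d) ∈ R := (memR_iff O R hR _).2 hsc
    have hmem1 : s * x e ∈ f {e} := by
      have h2 := (f {e}).smul_mem (⟨s, hsR'⟩ : R) (hx1 e)
      exact h2
    have hmem2 : s * x e ∈ f {d} := by
      have hE : s * x e = (s * (x e / x d)) * x d := by
        field_simp
      have h2 := (f {d}).smul_mem (⟨s * (x e / x d), hscR⟩ : R) (hx1 d)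
      rw [hE]
      exact h2
    have hinterm : ({d} : Set (Fin (n + 1))) ∩ {e} = ∅ := by
      rw [Set.singleton_inter_eq_empty]
      simpa using hde
    have hfin : f {d} ⊓ f {e} = f ∅ := by
      rw [← finf, hinterm]
    have hmem : s * x e ∈ f ∅ := by
      rw [← hfin]
      exact Submodule.mem_inf.2 ⟨hmem2, hmem1⟩
    refine hI e ⟨s, hsR', ?_, hmem⟩
    rw [← hIe]
    exact hsv
  rcases le_total ((O (I d)).valuation (x e)) ((O (I d)).valuation (x d)) with h | h
  · exact key d e hde hIde h
  · refine key e d hde.symm hIde.symm ?_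
    rw [← hIde]
    exact h

theorem exists_c (hinc : ∀ i j : Fin n, i ≠ j → ¬((O i : Set K) ⊆ (O j : Set K)))
    (hn2 : 2 ≤ n) :
    ∃ c : Fin n → K, ∀ i, c i ≠ 0 ∧ (O i).valuation (c i) < 1 ∧
      ∀ j, j ≠ i → (O j).valuation (c i) = 1 := by
  choose Y hY1 hY2 using fun k => exists_Y O hinc (by omega) k
  refine ⟨fun i => ∑ k ∈ univ.erase i, Y k, fun i => ?_⟩
  have hsmall : (O i).valuation (∑ k ∈ univ.erase i, Y k) < 1 := by
    refine Valuation.map_sum_lt _ one_ne_zero ?_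
    intro k hk
    exact hY2 k i (Ne.symm (mem_erase.1 hk).1)
  have hunit : ∀ j, j ≠ i → (O j).valuation (∑ k ∈ univ.erase i, Y k) = 1 := by
    intro j hj
    have hjmem : j ∈ univ.erase i := mem_erase.2 ⟨hj, mem_univ _⟩
    have h2 := map_sum_eq_of_lt' (O j).valuation (f := fun k => Y k) hjmem
      (by rw [hY1 j]; exact one_ne_zero) ?_
    · rw [h2, hY1 j]
    · intro k _ hkj
      rw [hY1 j]
      exact hY2 k j hkj.symm
  have hne0 : (∑ k ∈ univ.erase i, Y k) ≠ 0 := by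
    haveI : Nontrivial (Fin n) := Fin.nontrivial_iff_two_le.2 hn2
    obtain ⟨j, hj⟩ := exists_ne i
    intro h0
    have := hunit j hj
    rw [h0, map_zero] at this
    exact zero_ne_one this
  exact ⟨hne0, hsmall, hunit⟩

theorem exists_cube (hinc : ∀ i j : Fin n, i ≠ j → ¬((O i : Set K) ⊆ (O j : Set K)))
    (hR : (R : Set K) = ⋂ i, (O i : Set K)) (hn2 : 2 ≤ n) :
    ∃ f : Set (Fin n) → Submodule R K, IsStrictCube f := by
  classical
  have hn : 0 < n := by omega
  obtain ⟨c, hc⟩ := exists_c O hinc hn2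
  have hc0 : ∀ i, c i ≠ 0 := fun i => (hc i).1
  have hcs : ∀ i, (O i).valuation (c i) < 1 := fun i => (hc i).2.1
  have hcu : ∀ i j, j ≠ i → (O j).valuation (c i) = 1 := fun i j h => (hc i).2.2 j h
  have hcmem : ∀ i j, c i ∈ O j := by
    intro i j
    rw [← (O j).valuation_le_one_iff]
    rcases eq_or_ne j i with rfl | h
    · exact le_of_lt (hcs j)
    · exact le_of_eq (hcu i j h)
  have hRO : ∀ z : K, z ∈ R → ∀ j, z ∈ O j := by
    intro z hz j
    exact ((O j).valuation_le_one_iff z).1 ((memR_iff O R hR z).1 hz j)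
  set F : Set (Fin n) → Submodule R K := fun s =>
    { carrier := {y : K | ∀ i, (if i ∈ s then c i else 1) * y ∈ O i}
      add_mem' := fun {a b} ha hb i => by
        have h2 := (O i).add_mem _ _ (ha i) (hb i)
        rwa [← mul_add] at h2
      zero_mem' := fun i => by
        rw [mul_zero]
        exact zero_mem _
      smul_mem' := fun r y hy i => by
        have hr : (r : K) ∈ O i := hRO r r.2 i
        have hE : (if i ∈ s then c i else 1) * (r • y) =
            (r : K) * ((if i ∈ s then c i else 1) * y) := by
          show (if i ∈ s then c i else 1) * ((r : K) * y) = _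
          ring
        rw [hE]
        exact (O i).mul_mem _ _ hr (hy i) } with hF
  have hmemF : ∀ s (y : K), y ∈ F s ↔ ∀ i, (if i ∈ s then c i else 1) * y ∈ O i :=
    fun s y => Iff.rfl
  have hFmono : ∀ s t, s ⊆ t → F s ≤ F t := by
    intro s t hst y hy
    rw [hmemF] at hy ⊢
    intro i
    by_cases hit : i ∈ t
    · rw [if_pos hit]
      by_cases his : i ∈ s
      · have := hy i
        rwa [if_pos his] at this
      · have := hy i
        rw [if_neg his, one_mul] at this
        exact (O i).mul_mem _ _ (hcmem i i) this
    · have his : i ∉ s := fun h => hit (hst h)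
      rw [if_neg hit]
      have := hy i
      rwa [if_neg his] at this
  have hprod : ∀ (G : Finset (Fin n)) (j : Fin n),
      (j ∈ G → (O j).valuation (∏ i ∈ G, c i) = (O j).valuation (c j)) ∧
      (j ∉ G → (O j).valuation (∏ i ∈ G, c i) = 1) := by
    intro G j
    constructor
    · intro hj
      have h2 : ∏ k ∈ G.erase j, (O j).valuation (c k) = 1 :=
        Finset.prod_eq_one fun k hk => hcu k j (Ne.symm (mem_erase.1 hk).1)
      rw [map_prod, ← Finset.mul_prod_erase G _ hj, h2, mul_one]
    · intro hj
      have h2 : ∏ k ∈ G, (O j).valuation (c k) = 1 :=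
        Finset.prod_eq_one fun k hk => hcu k j fun h => hj (h ▸ hk)
      rw [map_prod, h2]
  have hsupF : ∀ s t, F (s ∪ t) = F s ⊔ F t := by
    intro s t
    refine le_antisymm ?_ (sup_le (hFmono _ _ Set.subset_union_left)
      (hFmono _ _ Set.subset_union_right))
    intro y hy
    rw [hmemF] at hy
    set B : Finset (Fin n) := Finset.univ.filter (fun i => i ∈ t ∧ i ∉ s) with hB
    set P : K := ∏ i ∈ Finset.univ \ B, c i with hP
    set Q : K := ∏ i ∈ B, c i with hQ
    have hPQ : ∀ j, (O j).valuation (P + Q) = 1 := by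
      intro j
      by_cases hj : j ∈ B
      · have h1 : (O j).valuation P = 1 := (hprod _ j).2 (by simp [hj])
        have h2 : (O j).valuation Q = (O j).valuation (c j) := (hprod _ j).1 hj
        have hlt : (O j).valuation Q < (O j).valuation P := by
          rw [h1, h2]
          exact hcs j
        rw [Valuation.map_add_eq_of_lt_left _ hlt, h1]
      · have h1 : (O j).valuation P = (O j).valuation (c j) :=
          (hprod _ j).1 (by simp [hj])
        have h2 : (O j).valuation Q = 1 := (hprod _ j).2 hj
        have hlt : (O j).valuation P < (O j).valuation Q := by
          rw [h1, h2]
          exact hcs j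
        rw [Valuation.map_add_eq_of_lt_right _ hlt, h2]
    have hPQ0 : P + Q ≠ 0 := by
      intro h0
      have := hPQ ⟨0, hn⟩
      rw [h0, map_zero] at this
      exact zero_ne_one this
    set ε : K := P / (P + Q) with hε
    have hve1 : ∀ j, j ∈ B → (O j).valuation ε = 1 := by
      intro j hj
      rw [hε, map_div₀, hPQ j, div_one]
      exact (hprod _ j).2 (by simp [hj])
    have hve2 : ∀ j, j ∉ B → (O j).valuation ε = (O j).valuation (c j) := by
      intro j hj
      rw [hε, map_div₀, hPQ j, div_one]
      exact (hprod _ j).1 (by simp [hj])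
    have hε1 : 1 - ε = Q / (P + Q) := by
      rw [hε]
      field_simp
      ring
    have hw1 : ∀ j, j ∈ B → (O j).valuation (1 - ε) = (O j).valuation (c j) := by
      intro j hj
      rw [hε1, map_div₀, hPQ j, div_one]
      exact (hprod _ j).1 hj
    have hw2 : ∀ j, j ∉ B → (O j).valuation (1 - ε) = 1 := by
      intro j hj
      rw [hε1, map_div₀, hPQ j, div_one]
      exact (hprod _ j).2 hj
    have hcond : ∀ i, i ∈ s ∪ t → (O i).valuation (c i * y) ≤ 1 := by
      intro i hi
      have := hy i
      rw [if_pos hi] at this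
      exact ((O i).valuation_le_one_iff _).2 this
    have hcond2 : ∀ i, i ∉ s ∪ t → (O i).valuation y ≤ 1 := by
      intro i hi
      have := hy i
      rw [if_neg hi, one_mul] at this
      exact ((O i).valuation_le_one_iff _).2 this
    refine Submodule.mem_sup.2 ⟨(1 - ε) * y, ?_, ε * y, ?_, by ring⟩
    · rw [hmemF]
      intro i
      rw [← (O i).valuation_le_one_iff]
      by_cases his : i ∈ s
      · rw [if_pos his]
        have h1 : (O i).valuation (1 - ε) ≤ 1 := by
          by_cases hiB : i ∈ B
          · rw [hw1 i hiB]
            exact (hcs i).le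
          · rw [hw2 i hiB]
        have hE : c i * ((1 - ε) * y) = (1 - ε) * (c i * y) := by ring
        rw [hE, Valuation.map_mul]
        calc (O i).valuation (1 - ε) * (O i).valuation (c i * y)
            ≤ 1 * 1 := mul_le_mul' h1 (hcond i (Set.mem_union_left _ his))
          _ = 1 := one_mul 1
      · rw [if_neg his, one_mul]
        by_cases hit : i ∈ t
        · have hiB : i ∈ B := by simp [hB, hit, his]
          rw [Valuation.map_mul, hw1 i hiB, ← Valuation.map_mul]
          exact hcond i (Set.mem_union_right _ hit)
        · have hiB : i ∉ B := by simp [hB, hit]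
          rw [Valuation.map_mul, hw2 i hiB, one_mul]
          exact hcond2 i (fun h => h.elim his hit)
    · rw [hmemF]
      intro i
      rw [← (O i).valuation_le_one_iff]
      by_cases hit : i ∈ t
      · rw [if_pos hit]
        have h1 : (O i).valuation ε ≤ 1 := by
          by_cases hiB : i ∈ B
          · rw [hve1 i hiB]
          · rw [hve2 i hiB]
            exact (hcs i).le
        have hE : c i * (ε * y) = ε * (c i * y) := by ring
        rw [hE, Valuation.map_mul]
        calc (O i).valuation ε * (O i).valuation (c i * y)
            ≤ 1 * 1 := mul_le_mul' h1 (hcond i (Set.mem_union_right _ hit))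
          _ = 1 := one_mul 1
      · rw [if_neg hit, one_mul]
        have hiB : i ∉ B := by simp [hB, hit]
        by_cases his : i ∈ s
        · rw [Valuation.map_mul, hve2 i hiB, ← Valuation.map_mul]
          exact hcond i (Set.mem_union_left _ his)
        · rw [Valuation.map_mul, hve2 i hiB]
          calc (O i).valuation (c i) * (O i).valuation y
              ≤ 1 * 1 := mul_le_mul' (hcs i).le (hcond2 i (fun h => h.elim his hit))
            _ = 1 := one_mul 1
  have hinfF : ∀ s t, F (s ∩ t) = F s ⊓ F t := by
    intro s t
    refine le_antisymm ?_ ?_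
    · intro y hy
      rw [Submodule.mem_inf]
      exact ⟨hFmono _ _ Set.inter_subset_left hy, hFmono _ _ Set.inter_subset_right hy⟩
    · intro y hy
      rw [Submodule.mem_inf] at hy
      obtain ⟨hys, hyt⟩ := hy
      rw [hmemF] at hys hyt ⊢
      intro i
      by_cases hi : i ∈ s ∩ t
      · rw [if_pos hi]
        have := hys i
        rwa [if_pos hi.1] at this
      · rw [if_neg hi, one_mul]
        by_cases his : i ∈ s
        · have hit : i ∉ t := fun h => hi ⟨his, h⟩
          have := hyt i
          rwa [if_neg hit, one_mul] at this
        · have := hys i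
          rwa [if_neg his, one_mul] at this
  have hneF : ∀ s t : Set (Fin n), ∀ i, i ∈ s → i ∉ t → F s ≠ F t := by
    intro s t i his hit hcon
    have hw : (c i)⁻¹ ∈ F s := by
      rw [hmemF]
      intro j
      by_cases hjs : j ∈ s
      · rw [if_pos hjs]
        rcases eq_or_ne j i with rfl | hji
        · rw [mul_inv_cancel₀ (hc0 j)]
          exact one_mem _
        · rw [← (O j).valuation_le_one_iff, Valuation.map_mul, map_inv₀,
            hcu i j hji, inv_one, mul_one]
          exact (hcs j).le
      · rw [if_neg hjs, one_mul, ← (O j).valuation_le_one_iff, map_inv₀]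
        have hji : j ≠ i := fun h => hjs (h ▸ his)
        rw [hcu i j hji, inv_one]
    have hw2 : (c i)⁻¹ ∈ F t := hcon ▸ hw
    rw [hmemF] at hw2
    have hmem := hw2 i
    rw [if_neg hit, one_mul, ← (O i).valuation_le_one_iff, map_inv₀] at hmem
    have hlt : 1 < ((O i).valuation (c i))⁻¹ := by
      rw [one_lt_inv₀ (zero_lt_iff.2 ((Valuation.ne_zero_iff _).2 (hc0 i)))]
      exact hcs i
    exact absurd hmem (not_le.2 hlt)
  refine ⟨F, ?_, hsupF, hinfF⟩
  intro s t hst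
  by_contra hcon
  have hsub : ¬(s ⊆ t) ∨ ¬(t ⊆ s) := by
    by_contra h
    push_neg at h
    exact hcon (Set.Subset.antisymm h.1 h.2)
  rcases hsub with h | h
  · obtain ⟨i, his, hit⟩ := Set.not_subset.1 h
    exact hneF s t i his hit hst
  · obtain ⟨i, hit, his⟩ := Set.not_subset.1 h
    exact hneF t s i hit his hst.symm

end Places

end RRV

/-- If `R` is the intersection of `n ≥ 1` pairwise incomparable valuation subrings of a
field `K`, then the lattice of `R`-submodules of `K` has reduced rank exactly `n`: it
contains a strict `n`-cube but no strict `(n+1)`-cube. -/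
theorem reducedRank_submodules_of_multiValuationRing
    {K : Type*} [Field K] (n : ℕ) (hn : 1 ≤ n)
    (O : Fin n → ValuationSubring K)
    (hinc : ∀ i j : Fin n, i ≠ j → ¬((O i : Set K) ⊆ (O j : Set K)))
    (R : Subring K) (hR : (R : Set K) = ⋂ i, (O i : Set K)) :
    (∃ f : Set (Fin n) → Submodule R K, IsStrictCube f) ∧
    ¬(∃ f : Set (Fin (n + 1)) → Submodule R K, IsStrictCube f) := by
  constructor
  · rcases Nat.lt_or_ge n 2 with h2 | h2
    · have hn1 : n = 1 := by omega
      subst hn1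
      classical
      have huniv : ∀ s : Set (Fin 1), s = ∅ ∨ s = Set.univ := by
        intro s
        rcases Set.eq_empty_or_nonempty s with h | h
        · exact Or.inl h
        · right
          obtain ⟨z, hz⟩ := h
          ext y
          simp only [Set.mem_univ, iff_true]
          rwa [Subsingleton.elim y z]
      have hbt : (⊥ : Submodule R K) ≠ ⊤ := by
        intro h
        have h1 : (1 : K) ∈ (⊥ : Submodule R K) := h ▸ Submodule.mem_top
        rw [Submodule.mem_bot] at h1
        exact one_ne_zero h1
      have hUe : (Set.univ : Set (Fin 1)) ≠ ∅ := by
        simp [Set.univ_eq_empty_iff]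
      refine ⟨fun s => if s = ∅ then ⊥ else ⊤, ?_, ?_, ?_⟩
      · intro s t h
        rcases huniv s with rfl | rfl <;> rcases huniv t with rfl | rfl
        · rfl
        · simp only [] at h
          rw [if_pos trivial, if_neg hUe] at h
          exact absurd h hbt
        · simp only [] at h
          rw [if_pos trivial, if_neg hUe] at h
          exact absurd h.symm hbt
        · rfl
      · intro s t
        rcases huniv s with rfl | rfl <;> rcases huniv t with rfl | rfl <;>
          simp [hUe]
      · intro s t
        rcases huniv s with rfl | rfl <;> rcases huniv t with rfl | rfl <;>
          simp [hUe]
    · exact RRV.exists_cube O R hinc hR h2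
  · exact RRV.no_big_cube O R hinc hR (by omega)
end

section
/- Let C be an abelian category, and for an object A let rk₀(A) ∈ ℕ ∪ {∞} denote the reduced rank of the subobject lattice Sub(A). Then: (1) if there is an epimorphism A → B, then rk₀(A) ≥ rk₀(B); (2) if there is a monomorphism A → B, then rk₀(A) ≤ rk₀(B); (3) if 0 → A → B → C → 0 is a short exact sequence, then rk₀(B) ≤ rk₀(A) + rk₀(C), and equality holds if the sequence splits; (4) rk₀(A) = 0 if and only if A is a zero object. -/
open CategoryTheory

/-- The reduced rank of a lattice: the supremum of the sizes of strict cubes in it. -/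
noncomputable def reducedRank (M : Type*) [Lattice M] : ℕ∞ :=
  ⨆ (n : ℕ) (_ : ∃ f : Set (Fin n) → M, IsStrictCube f), (n : ℕ∞)

open CategoryTheory.Limits Opposite

namespace RRAux

variable {M : Type*} [Lattice M] {n : ℕ}

theorem cube_mono {f : Set (Fin n) → M} (hf : IsStrictCube f) {s t : Set (Fin n)}
    (h : s ⊆ t) : f s ≤ f t := by
  have := hf.2.1 s t
  rw [Set.union_eq_self_of_subset_left h] at this
  exact le_sup_left.trans this.ge

theorem strictCube_of_laws {f : Set (Fin n) → M}
    (h1 : ∀ s t : Set (Fin n), f (s ∪ t) = f s ⊔ f t)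
    (h2 : ∀ s t : Set (Fin n), f (s ∩ t) = f s ⊓ f t)
    (h3 : ∀ i : Fin n, f {i} ≠ f ∅) : IsStrictCube f := by
  have mono : ∀ s t : Set (Fin n), s ⊆ t → f s ≤ f t := by
    intro s t h
    have := h1 s t
    rw [Set.union_eq_self_of_subset_left h] at this
    exact le_sup_left.trans this.ge
  have key : ∀ s t : Set (Fin n), f s = f t → s ⊆ t := by
    intro s t hst i hi
    by_contra hit
    have h4 : f (s ∩ t) = f s := by rw [h2, hst, inf_idem]
    have h5 : f {i} ≤ f (s ∩ t) := h4 ▸ mono _ _ (Set.singleton_subset_iff.2 hi)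
    have h6 : ({i} : Set (Fin n)) ∩ (s ∩ t) = ∅ := by
      ext j; simp only [Set.mem_inter_iff, Set.mem_singleton_iff, Set.mem_empty_iff_false,
        iff_false]
      rintro ⟨rfl, -, hj⟩; exact hit hj
    have := h2 {i} (s ∩ t)
    rw [h6, inf_eq_left.mpr h5] at this
    exact h3 i this.symm
  exact ⟨fun s t hst => Set.Subset.antisymm (key s t hst) (key t s hst.symm), h1, h2⟩

theorem cube_comp {N : Type*} [Lattice N] {f : Set (Fin n) → M} (hf : IsStrictCube f)
    (φ : M → N)
    (hsup : ∀ s t : Set (Fin n), φ (f s ⊔ f t) = φ (f s) ⊔ φ (f t))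
    (hinf : ∀ s t : Set (Fin n), φ (f s ⊓ f t) = φ (f s) ⊓ φ (f t))
    (hinj : ∀ s t : Set (Fin n), φ (f s) = φ (f t) → f s = f t) :
    IsStrictCube (φ ∘ f) :=
  ⟨fun s t h => hf.1 (hinj s t h),
   fun s t => by simp only [Function.comp_apply, hf.2.1 s t, hsup],
   fun s t => by simp only [Function.comp_apply, hf.2.2 s t, hinf]⟩

theorem cube_const (x : M) : IsStrictCube (fun _ : Set (Fin 0) => x) := by
  refine ⟨fun s t _ => ?_, fun _ _ => (sup_idem x).symm, fun _ _ => (inf_idem x).symm⟩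
  ext i; exact absurd i.2 (by exact fun h => i.elim0)

theorem cube_restrict {m : ℕ} (h : n ≤ m) {f : Set (Fin m) → M} (hf : IsStrictCube f) :
    IsStrictCube (fun s : Set (Fin n) => f (Fin.castLE h '' s)) := by
  have hinj : Function.Injective (Fin.castLE h) := Fin.castLE_injective h
  refine ⟨fun s t hst => Set.image_injective.2 hinj (hf.1 hst), fun s t => ?_, fun s t => ?_⟩
  · show f _ = f _ ⊔ f _
    rw [Set.image_union, hf.2.1]
  · show f _ = f _ ⊓ f _
    rw [Set.image_inter hinj, hf.2.2]

theorem le_reducedRank (h : ∃ f : Set (Fin n) → M, IsStrictCube f) :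
    (n : ℕ∞) ≤ reducedRank M :=
  le_iSup₂ (f := fun (k : ℕ) (_ : ∃ f : Set (Fin k) → M, IsStrictCube f) => (k : ℕ∞)) n h

theorem reducedRank_le {c : ℕ∞}
    (h : ∀ k : ℕ, (∃ f : Set (Fin k) → M, IsStrictCube f) → (k : ℕ∞) ≤ c) :
    reducedRank M ≤ c := iSup₂_le h

theorem reducedRank_le_of_cubes {N : Type*} [Lattice N]
    (H : ∀ k : ℕ, (∃ f : Set (Fin k) → M, IsStrictCube f) →
      (∃ g : Set (Fin k) → N, IsStrictCube g)) :
    reducedRank M ≤ reducedRank N :=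
  reducedRank_le fun k hk => le_reducedRank (H k hk)

theorem exists_cube_of_le_rank (x : M) (hn : (n : ℕ∞) ≤ reducedRank M) :
    ∃ f : Set (Fin n) → M, IsStrictCube f := by
  rcases n with - | k
  · exact ⟨_, cube_const x⟩
  · have h1 : ((k : ℕ∞)) < reducedRank M := lt_of_lt_of_le (by exact_mod_cast Nat.lt_succ_self k) hn
    rw [reducedRank, lt_iSup_iff] at h1
    obtain ⟨m, hm⟩ := h1
    rw [lt_iSup_iff] at hm
    obtain ⟨⟨f, hf⟩, hlt⟩ := hm
    have hkm : k + 1 ≤ m := by exact_mod_cast Nat.cast_lt.mp hlt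
    exact ⟨_, cube_restrict hkm hf⟩



variable {M : Type*} [Lattice M]

/-- exchange lemma in modular lattices -/
theorem exch [IsModularLattice M] {b J m c : M} (hbJ : b ≤ J)
    (h1 : m ⊓ (J ⊔ c) ≤ b) (h2 : c ⊓ J ≤ b) : c ⊓ (J ⊔ m) ≤ b := by
  have e1 : (J ⊔ m) ⊓ (J ⊔ c) = J ⊔ m ⊓ (J ⊔ c) := sup_inf_assoc_of_le _ le_sup_left
  have e2 : (J ⊔ m) ⊓ (J ⊔ c) ≤ J := by
    rw [e1]; exact sup_le le_rfl (h1.trans hbJ)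
  have e3 : c ⊓ (J ⊔ m) ≤ (J ⊔ m) ⊓ (J ⊔ c) :=
    le_inf inf_le_right (inf_le_left.trans le_sup_right)
  exact (le_inf inf_le_left (e3.trans e2)).trans h2

section Splice

variable [OrderBot M] [IsModularLattice M] {a' c' : M}

theorem splice_inf_left (hd : a' ⊓ c' = ⊥) {u v : M} (hu : u ≤ a') (hv : v ≤ c') :
    (u ⊔ v) ⊓ a' = u := by
  have h1 : (u ⊔ v) ⊓ a' = u ⊔ v ⊓ a' := sup_inf_assoc_of_le _ hu
  have h2 : v ⊓ a' = ⊥ := le_bot_iff.1 (hd ▸ le_inf inf_le_right (inf_le_left.trans hv))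
  rw [h1, h2, sup_bot_eq]

theorem splice_inf_right (hd : a' ⊓ c' = ⊥) {u v : M} (hu : u ≤ a') (hv : v ≤ c') :
    (u ⊔ v) ⊓ c' = v := by
  rw [sup_comm]
  exact splice_inf_left (by rw [inf_comm, hd]) hv hu

private theorem splice_aux (hd : a' ⊓ c' = ⊥) {u₁ u₂ v₁ v₂ : M}
    (hu1 : u₁ ≤ a') (hu2 : u₂ ≤ a') (hv1 : v₁ ≤ c') (hv2 : v₂ ≤ c') :
    (u₁ ⊔ v₁) ⊓ (u₂ ⊔ v₂) ≤ (u₁ ⊓ u₂) ⊔ v₁ := by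
  have s1 : (u₁ ⊔ v₁) ⊓ (u₂ ⊔ v₂) ≤ (u₁ ⊔ v₁) ⊓ (u₂ ⊔ c') :=
    inf_le_inf_left _ (sup_le_sup_left hv2 _)
  have s2 : (u₁ ⊔ v₁) ⊓ (u₂ ⊔ c') = v₁ ⊔ u₁ ⊓ (u₂ ⊔ c') := by
    rw [sup_comm u₁ v₁]
    exact sup_inf_assoc_of_le _ (hv1.trans le_sup_right)
  have s3 : u₁ ⊓ (u₂ ⊔ c') ≤ u₁ ⊓ u₂ := by
    have h : u₁ ⊓ (u₂ ⊔ c') ≤ (u₂ ⊔ c') ⊓ a' := le_inf inf_le_right (inf_le_left.trans hu1)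
    rw [splice_inf_left hd hu2 le_rfl] at h
    exact le_inf inf_le_left h
  calc (u₁ ⊔ v₁) ⊓ (u₂ ⊔ v₂) ≤ v₁ ⊔ u₁ ⊓ (u₂ ⊔ c') := s1.trans s2.le
    _ ≤ v₁ ⊔ u₁ ⊓ u₂ := sup_le_sup_left s3 _
    _ = (u₁ ⊓ u₂) ⊔ v₁ := sup_comm _ _

theorem splice_inf (hd : a' ⊓ c' = ⊥) {u₁ u₂ v₁ v₂ : M}
    (hu1 : u₁ ≤ a') (hu2 : u₂ ≤ a') (hv1 : v₁ ≤ c') (hv2 : v₂ ≤ c') :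
    (u₁ ⊔ v₁) ⊓ (u₂ ⊔ v₂) = (u₁ ⊓ u₂) ⊔ (v₁ ⊓ v₂) := by
  have hd' : c' ⊓ a' = ⊥ := by rw [inf_comm, hd]
  refine le_antisymm ?_ (sup_le (le_inf (inf_le_left.trans le_sup_left)
    (inf_le_right.trans le_sup_left)) (le_inf (inf_le_left.trans le_sup_right)
    (inf_le_right.trans le_sup_right)))
  have h1 : (u₁ ⊔ v₁) ⊓ (u₂ ⊔ v₂) ≤ (u₁ ⊓ u₂) ⊔ v₁ := splice_aux hd hu1 hu2 hv1 hv2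
  have h2 : (u₁ ⊔ v₁) ⊓ (u₂ ⊔ v₂) ≤ (v₁ ⊓ v₂) ⊔ u₁ := by
    have h := splice_aux hd' hv1 hv2 hu1 hu2
    rwa [sup_comm v₁ u₁, sup_comm v₂ u₂] at h
  refine (le_inf h1 h2).trans ?_
  have h3 : ((u₁ ⊓ u₂) ⊔ v₁) ⊓ ((v₁ ⊓ v₂) ⊔ u₁) = (u₁ ⊓ u₂) ⊔ v₁ ⊓ ((v₁ ⊓ v₂) ⊔ u₁) :=
    sup_inf_assoc_of_le _ (inf_le_left.trans le_sup_right)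
  rw [h3]
  refine sup_le_sup_left ?_ _
  have h4 : v₁ ⊓ ((v₁ ⊓ v₂) ⊔ u₁) ≤ ((v₁ ⊓ v₂) ⊔ u₁) ⊓ c' :=
    le_inf inf_le_right (inf_le_left.trans hv1)
  have h5 : ((v₁ ⊓ v₂) ⊔ u₁) ⊓ c' = v₁ ⊓ v₂ := by
    rw [sup_comm]
    exact splice_inf_right hd hu1 (inf_le_left.trans hv1)
  rwa [h5] at h4

end Splice

section IntervalMaps

variable [IsModularLattice M] {a b T : M}

omit [IsModularLattice M] in
theorem inf_aT {z : M} (hzT : z ≤ T) : z ⊓ a = z ⊓ (a ⊓ T) := by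
  rw [← inf_assoc, inf_eq_left.2 (inf_le_left.trans hzT : z ⊓ a ≤ T)]

private theorem bot_reconstruct_c {c : M} {z : M} (hz1 : b ≤ z) (hz2 : z ≤ b ⊔ c) :
    z = b ⊔ z ⊓ c := by
  have h1 : (b ⊔ c) ⊓ z = b ⊔ c ⊓ z := sup_inf_assoc_of_le _ hz1
  rw [inf_eq_right.2 hz2] at h1
  rw [inf_comm z c]; exact h1

theorem bot_reconstruct {z : M} (hz1 : b ≤ z) (hz2 : z ≤ b ⊔ a ⊓ T)
    (hzT : z ≤ T) : z = b ⊔ z ⊓ a := by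
  rw [inf_aT hzT]; exact bot_reconstruct_c hz1 hz2

private theorem bot_sup_inf_c {c : M} {z w : M} (hz1 : b ≤ z) (hz2 : z ≤ b ⊔ c)
    (hw1 : b ≤ w) (hw2 : w ≤ b ⊔ c) : (z ⊔ w) ⊓ c = z ⊓ c ⊔ w ⊓ c := by
  have key : z ⊔ w = b ⊔ (z ⊓ c ⊔ w ⊓ c) := by
    conv_lhs => rw [bot_reconstruct_c hz1 hz2, bot_reconstruct_c hw1 hw2]
    rw [sup_sup_sup_comm, sup_idem]
  rw [key, sup_comm b _]
  have h1 : (z ⊓ c ⊔ w ⊓ c ⊔ b) ⊓ c = (z ⊓ c ⊔ w ⊓ c) ⊔ b ⊓ c :=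
    sup_inf_assoc_of_le _ (sup_le inf_le_right inf_le_right)
  rw [h1, sup_eq_left.2 ((inf_le_inf_right c hz1).trans le_sup_left)]

theorem bot_sup_inf (hz1 : b ≤ z) (hz2 : z ≤ b ⊔ a ⊓ T) (hzT : z ≤ T)
    (hw1 : b ≤ w) (hw2 : w ≤ b ⊔ a ⊓ T) (hwT : w ≤ T) :
    (z ⊔ w) ⊓ a = z ⊓ a ⊔ w ⊓ a := by
  rw [inf_aT hzT, inf_aT hwT, inf_aT (sup_le hzT hwT)]
  exact bot_sup_inf_c hz1 hz2 hw1 hw2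

theorem top_reconstruct {z : M} (hz1 : a ⊓ T ≤ z) (hzT : z ≤ T) : z = (z ⊔ a) ⊓ T := by
  rw [sup_inf_assoc_of_le _ hzT, sup_eq_left.2 hz1]

theorem top_inf_sup {z w : M} (hz1 : a ⊓ T ≤ z) (hzT : z ≤ T) (hw1 : a ⊓ T ≤ w) (hwT : w ≤ T) :
    z ⊓ w ⊔ a = (z ⊔ a) ⊓ (w ⊔ a) := by
  have step3 : z ⊓ (w ⊔ a) = z ⊓ (w ⊔ a ⊓ T) := by
    have e : (w ⊔ a) ⊓ T = w ⊔ a ⊓ T := sup_inf_assoc_of_le _ hwT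
    calc z ⊓ (w ⊔ a) = z ⊓ T ⊓ (w ⊔ a) := by rw [inf_eq_left.2 hzT]
      _ = z ⊓ (T ⊓ (w ⊔ a)) := inf_assoc _ _ _
      _ = z ⊓ (w ⊔ a ⊓ T) := by rw [inf_comm T _, e]
  have step4 : z ⊓ (w ⊔ a ⊓ T) = a ⊓ T ⊔ w ⊓ z := by
    rw [sup_comm w (a ⊓ T), inf_comm z _]
    exact sup_inf_assoc_of_le _ hz1
  calc z ⊓ w ⊔ a = a ⊔ w ⊓ z := by rw [sup_comm, inf_comm z w]
    _ = a ⊔ (a ⊓ T ⊔ w ⊓ z) := by rw [← sup_assoc, sup_eq_left.2 (inf_le_left : a ⊓ T ≤ a)]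
    _ = a ⊔ z ⊓ (w ⊔ a ⊓ T) := by rw [step4]
    _ = a ⊔ z ⊓ (w ⊔ a) := by rw [step3]
    _ = (a ⊔ z) ⊓ (w ⊔ a) := (sup_inf_assoc_of_le _ le_sup_right).symm
    _ = (z ⊔ a) ⊓ (w ⊔ a) := by rw [sup_comm a z]

end IntervalMaps


section Fold

variable {M : Type*} [Lattice M] {p : ℕ}

/-- join of `β` with the `d i`, `i ∈ s` -/
def ffin (β : M) (d : Fin p → M) (s : Finset (Fin p)) : M :=
  Finset.fold (· ⊔ ·) β d s

@[simp] theorem ffin_empty {β : M} {d : Fin p → M} : ffin β d ∅ = β := rfl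

theorem ffin_insert {β : M} {d : Fin p → M} {i : Fin p} {s : Finset (Fin p)} (h : i ∉ s) :
    ffin β d (insert i s) = d i ⊔ ffin β d s :=
  Finset.fold_insert h

theorem le_ffin_self {β : M} {d : Fin p → M} (s : Finset (Fin p)) : β ≤ ffin β d s := by
  classical
  induction s using Finset.induction_on with
  | empty => simp
  | insert _ _ h ih => rw [ffin_insert h]; exact ih.trans le_sup_right

theorem le_ffin {β : M} {d : Fin p → M} {j : Fin p} {s : Finset (Fin p)} (h : j ∈ s) :
    d j ≤ ffin β d s := by
  classical
  induction s using Finset.induction_on with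
  | empty => simp at h
  | insert _ _ hi ih =>
    rw [ffin_insert hi]
    rcases Finset.mem_insert.1 h with rfl | h'
    · exact le_sup_left
    · exact (ih h').trans le_sup_right

theorem ffin_le {β x : M} {d : Fin p → M} {s : Finset (Fin p)} (h1 : β ≤ x)
    (h2 : ∀ j ∈ s, d j ≤ x) : ffin β d s ≤ x := by
  classical
  induction s using Finset.induction_on with
  | empty => simpa using h1
  | insert _ _ hi ih =>
    rw [ffin_insert hi]
    exact sup_le (h2 _ (Finset.mem_insert_self _ _))
      (ih fun j hj => h2 j (Finset.mem_insert_of_mem hj))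

theorem ffin_mono {β : M} {d : Fin p → M} {s t : Finset (Fin p)} (h : s ⊆ t) :
    ffin β d s ≤ ffin β d t :=
  ffin_le (le_ffin_self t) fun j hj => le_ffin (h hj)

theorem ffin_union {β : M} {d : Fin p → M} (s t : Finset (Fin p)) :
    ffin β d (s ∪ t) = ffin β d s ⊔ ffin β d t := by
  refine le_antisymm (ffin_le (le_sup_left.trans' (le_ffin_self s)) fun j hj => ?_)
    (sup_le (ffin_mono Finset.subset_union_left) (ffin_mono Finset.subset_union_right))
  rcases Finset.mem_union.1 hj with h | h
  · exact (le_ffin h).trans le_sup_left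
  · exact (le_ffin h).trans le_sup_right

theorem ffin_inf_le [IsModularLattice M] {β : M} {d : Fin p → M}
    (H : ∀ (i : Fin p) (s : Finset (Fin p)), i ∉ s → d i ⊓ ffin β d s ≤ β)
    (s t : Finset (Fin p)) : ffin β d s ⊓ ffin β d t ≤ ffin β d (s ∩ t) := by
  classical
  induction s using Finset.induction_on with
  | empty =>
    rw [Finset.empty_inter]
    exact inf_le_left.trans le_rfl
  | @insert i s' hi ih =>
    rw [ffin_insert hi]
    by_cases hit : i ∈ t
    · have law : (d i ⊔ ffin β d s') ⊓ ffin β d t = d i ⊔ ffin β d s' ⊓ ffin β d t :=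
        sup_inf_assoc_of_le _ (le_ffin hit)
      rw [law, Finset.insert_inter_of_mem hit,
        ffin_insert (fun h => hi (Finset.mem_inter.1 h).1)]
      exact sup_le_sup_left ih _
    · have h1 : (d i ⊔ ffin β d s') ⊓ ffin β d t ≤ ffin β d s' := by
        have e1 : (d i ⊔ ffin β d s') ⊓ ffin β d t ≤
            (ffin β d s' ⊔ d i) ⊓ ffin β d (s' ∪ t) := by
          rw [sup_comm (d i) _]
          exact inf_le_inf_left _ (ffin_mono Finset.subset_union_right)
        have e2 : (ffin β d s' ⊔ d i) ⊓ ffin β d (s' ∪ t) =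
            ffin β d s' ⊔ d i ⊓ ffin β d (s' ∪ t) :=
          sup_inf_assoc_of_le _ (ffin_mono Finset.subset_union_left)
        have e3 : d i ⊓ ffin β d (s' ∪ t) ≤ β :=
          H i _ (by simp [hi, hit])
        refine e1.trans (e2.le.trans ?_)
        exact sup_le le_rfl (e3.trans (le_ffin_self _))
      rw [Finset.insert_inter_of_notMem hit]
      exact (le_inf h1 inf_le_right).trans ih

theorem cube_build [IsModularLattice M] {β : M} {d : Fin p → M}
    (H : ∀ (i : Fin p) (s : Finset (Fin p)), i ∉ s → d i ⊓ ffin β d s ≤ β)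
    (Hne : ∀ i, ¬d i ≤ β) :
    IsStrictCube (fun s : Set (Fin p) => ffin β d (Set.toFinite s).toFinset) := by
  classical
  have hconv : ∀ s : Set (Fin p), (Set.toFinite s).toFinset = s.toFinset := fun s =>
    Set.Finite.toFinset_eq_toFinset _
  refine RRAux.strictCube_of_laws ?_ ?_ ?_
  · intro s t
    show ffin β d _ = ffin β d _ ⊔ ffin β d _
    rw [hconv, hconv, hconv, Set.toFinset_union, ffin_union]
  · intro s t
    show ffin β d _ = ffin β d _ ⊓ ffin β d _
    rw [hconv, hconv, hconv, Set.toFinset_inter]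
    refine le_antisymm (le_inf (ffin_mono (Finset.inter_subset_left))
      (ffin_mono (Finset.inter_subset_right))) (ffin_inf_le H _ _)
  · intro i h
    have h' : ffin β d (Set.toFinite ({i} : Set (Fin p))).toFinset =
        ffin β d (Set.toFinite (∅ : Set (Fin p))).toFinset := h
    rw [hconv, Set.toFinset_singleton, Set.Finite.toFinset_eq_empty.2 rfl, ffin_empty,
      show ({i} : Finset (Fin p)) = insert i ∅ from rfl,
      ffin_insert (Finset.notMem_empty i), ffin_empty] at h'
    exact Hne i (h' ▸ le_sup_left)

end Fold

theorem core [IsModularLattice M] {n : ℕ} {f : Set (Fin n) → M} (hf : IsStrictCube f) {m : M}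
    (hbm : f ∅ ≤ m) (hmT : m ≤ f Set.univ) :
    ∃ (p q : ℕ) (g : Set (Fin p) → M) (h : Set (Fin q) → M),
      n ≤ p + q ∧ IsStrictCube g ∧ IsStrictCube h ∧
      (∀ s, f ∅ ≤ g s ∧ g s ≤ m) ∧ (∀ s, m ≤ h s ∧ h s ≤ f Set.univ) := by
  classical
  have bmono : ∀ s : Set (Fin n), f ∅ ≤ f s := fun s => cube_mono hf (Set.empty_subset s)
  have Tmono : ∀ s : Set (Fin n), f s ≤ f Set.univ := fun s => cube_mono hf (Set.subset_univ s)
  -- pick a maximal `U` with `m ⊓ f ↑U = f ∅`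
  set P : ℕ → Prop := fun k => ∃ V : Finset (Fin n), V.card = k ∧ m ⊓ f ↑V = f ∅ with hP
  have hcard : ∀ V : Finset (Fin n), V.card ≤ n := fun V => by
    simpa using Finset.card_le_univ V
  have hP0 : P 0 := ⟨∅, Finset.card_empty, by simpa using inf_eq_right.2 hbm⟩
  obtain ⟨U, hUcard, hUind⟩ : P (Nat.findGreatest P n) :=
    Nat.findGreatest_spec (Nat.zero_le n) hP0
  have hmax : ∀ i ∉ U, ¬m ⊓ f ↑(insert i U) = f ∅ := by
    intro i hi heq
    have hPk : P (U.card + 1) := ⟨insert i U, Finset.card_insert_of_notMem hi, heq⟩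
    have hgt : Nat.findGreatest P n < U.card + 1 := by omega
    have hle : U.card + 1 ≤ n := by
      have h' := hcard (insert i U)
      rwa [Finset.card_insert_of_notMem hi] at h'
    exact Nat.findGreatest_is_greatest hgt hle hPk
  set q := U.card with hq
  set p := Uᶜ.card with hp
  have hpq : p + q = n := by
    rw [hp, hq, Finset.card_compl, Fintype.card_fin]
    have := hcard U
    omega
  -- index functions
  set xV : Fin p → Fin n := fun i => (Uᶜ.equivFin.symm i).1 with hxV
  set xU : Fin q → Fin n := fun j => (U.equivFin.symm j).1 with hxU
  have hxVU : ∀ i, xV i ∉ U := by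
    intro i
    simp only [hxV]
    exact Finset.mem_compl.1 (Uᶜ.equivFin.symm i).2
  have hxUU : ∀ j, xU j ∈ U := by
    intro j
    simp only [hxU]
    exact (U.equivFin.symm j).2
  have hxVinj : Function.Injective xV := by
    intro i j h
    simp only [hxV] at h
    exact (Uᶜ.equivFin.symm).injective (Subtype.val_injective h)
  have hxUinj : Function.Injective xU := by
    intro i j h
    simp only [hxU] at h
    exact (U.equivFin.symm).injective (Subtype.val_injective h)
  -- families
  set dd : Fin p → M := fun i => m ⊓ f (↑U ∪ {xV i}) with hdd
  set ee : Fin q → M := fun j => m ⊔ f {xU j} with hee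
  -- H for dd
  have Hd : ∀ (i : Fin p) (s : Finset (Fin p)), i ∉ s → dd i ⊓ ffin (f ∅) dd s ≤ f ∅ := by
    intro i s his
    set SV : Set (Fin n) := ↑U ∪ xV '' ↑s with hSV
    have h1 : ffin (f ∅) dd s ≤ m ⊓ f SV := by
      refine ffin_le (le_inf hbm (bmono _)) fun j hj => ?_
      refine le_inf inf_le_left (inf_le_right.trans (cube_mono hf ?_))
      refine Set.union_subset Set.subset_union_left ?_
      exact Set.singleton_subset_iff.2 (Set.mem_union_right _ ⟨j, by simpa using hj, rfl⟩)
    have h2 : dd i ⊓ ffin (f ∅) dd s ≤ m ⊓ (f (↑U ∪ {xV i}) ⊓ f SV) := by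
      refine le_inf (inf_le_left.trans inf_le_left) (le_inf (inf_le_left.trans inf_le_right)
        ((inf_le_right.trans h1).trans inf_le_right))
    have hident : ((↑U ∪ {xV i}) ∩ SV : Set (Fin n)) = (↑U : Set (Fin n)) := by
      ext y
      simp only [hSV, Set.mem_inter_iff, Set.mem_union, Set.mem_singleton_iff,
        Set.mem_image, Finset.mem_coe]
      constructor
      · rintro ⟨hy1 | rfl, hy2⟩
        · exact hy1
        · rcases hy2 with hy2 | ⟨j, hj, hji⟩
          · exact absurd hy2 (hxVU i)
          · exact absurd ((hxVinj hji) ▸ hj) his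
      · intro hy
        exact ⟨Or.inl hy, Or.inl hy⟩
    calc dd i ⊓ ffin (f ∅) dd s ≤ m ⊓ (f (↑U ∪ {xV i}) ⊓ f SV) := h2
      _ = m ⊓ f ((↑U ∪ {xV i}) ∩ SV) := by rw [hf.2.2]
      _ = m ⊓ f ↑U := by rw [hident]
      _ = f ∅ := hUind
  have Hdne : ∀ i, ¬dd i ≤ f ∅ := by
    intro i hle
    refine hmax (xV i) (hxVU i) (le_antisymm ?_ (le_inf hbm (bmono _)))
    have : (↑(insert (xV i) U) : Set (Fin n)) = ↑U ∪ {xV i} := by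
      rw [Finset.coe_insert, Set.union_singleton]
    rw [this]
    exact hle
  -- H for ee
  have He : ∀ (j : Fin q) (s : Finset (Fin q)), j ∉ s → ee j ⊓ ffin m ee s ≤ m := by
    intro j s hjs
    set SL : Set (Fin n) := xU '' ↑s with hSL
    have h1 : ffin m ee s ≤ m ⊔ f SL := by
      refine ffin_le le_sup_left fun j' hj' => ?_
      refine sup_le_sup_left (cube_mono hf (Set.singleton_subset_iff.2 ?_)) _
      rw [hSL]
      exact ⟨j', by simpa using hj', rfl⟩
    have hexch : f {xU j} ⊓ (f SL ⊔ m) ≤ f ∅ := by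
      refine exch (bmono _) ?_ ?_
      · have : f SL ⊔ f {xU j} = f (SL ∪ {xU j}) := (hf.2.1 _ _).symm
        rw [this]
        have hsub : (SL ∪ {xU j} : Set (Fin n)) ⊆ ↑U := by
          refine Set.union_subset ?_ (Set.singleton_subset_iff.2 (hxUU j))
          rintro y ⟨j', _, rfl⟩
          exact hxUU j'
        exact (inf_le_inf_left m (cube_mono hf hsub)).trans hUind.le
      · have : f {xU j} ⊓ f SL = f ({xU j} ∩ SL) := (hf.2.2 _ _).symm
        rw [this]
        have hempty : ({xU j} ∩ SL : Set (Fin n)) = ∅ := by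
          ext y
          simp only [hSL, Set.mem_inter_iff, Set.mem_singleton_iff, Set.mem_image,
            Finset.mem_coe, Set.mem_empty_iff_false, iff_false, not_and]
          rintro rfl ⟨j', hj', hji⟩
          exact hjs ((hxUinj hji) ▸ hj')
        rw [hempty]
    have h2 : ee j ⊓ (m ⊔ f SL) ≤ m := by
      have law : (m ⊔ f {xU j}) ⊓ (m ⊔ f SL) = m ⊔ f {xU j} ⊓ (m ⊔ f SL) :=
        sup_inf_assoc_of_le _ le_sup_left
      rw [hee]
      show (m ⊔ f {xU j}) ⊓ (m ⊔ f SL) ≤ m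
      rw [law]
      refine sup_le le_rfl ?_
      have hx : f {xU j} ⊓ (m ⊔ f SL) ≤ f ∅ := by
        rw [sup_comm m (f SL)]; exact hexch
      exact hx.trans hbm
    exact (inf_le_inf_left _ h1).trans h2
  have Hene : ∀ j, ¬ee j ≤ m := by
    intro j hle
    have h1 : f {xU j} ≤ m := le_sup_right.trans hle
    have h2 : f {xU j} ≤ f ↑U := cube_mono hf (Set.singleton_subset_iff.2 (hxUU j))
    have h3 : f {xU j} = f ∅ := le_antisymm (hUind ▸ le_inf h1 h2) (bmono _)
    exact (Set.singleton_ne_empty (xU j)) (hf.1 h3)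
  refine ⟨p, q, _, _, by omega, cube_build Hd Hdne, cube_build He Hene, ?_, ?_⟩
  · intro s
    refine ⟨le_ffin_self _, ffin_le hbm fun j _ => inf_le_left⟩
  · intro s
    refine ⟨le_ffin_self _, ffin_le hmT fun j _ => sup_le hmT (Tmono _)⟩

end RRAux

namespace RRAux


variable {C : Type*} [Category C] [Abelian C]

theorem le_iff_factors {X : C} {x y : Subobject X} : x ≤ y ↔ y.Factors x.arrow := by
  constructor
  · intro h
    exact Subobject.factors_of_le _ h (Subobject.factors_self x)
  · intro h
    exact Subobject.le_of_comm (y.factorThru x.arrow h) (Subobject.factorThru_arrow _ _ _)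

theorem factors_iff_zero {X : C} (t : Subobject X) {T : C} (g : T ⟶ X) :
    t.Factors g ↔ g ≫ cokernel.π t.arrow = 0 := by
  constructor
  · intro h
    rw [← t.factorThru_arrow g h, Category.assoc, cokernel.condition, comp_zero]
  · intro h
    have := Abelian.monoLift_comp t.arrow g h
    rw [← this]
    exact Subobject.factors_comp_arrow _
theorem factors_of_epi_comp {X T T' : C} (t : Subobject X) (e : T' ⟶ T) [Epi e] (g : T ⟶ X)
    (h : t.Factors (e ≫ g)) : t.Factors g := by
  rw [factors_iff_zero] at h ⊢
  rw [Category.assoc] at h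
  exact (cancel_epi e).1 (by rw [h, comp_zero])

theorem factors_neg {X T : C} (t : Subobject X) (g : T ⟶ X) (h : t.Factors g) :
    t.Factors (-g) := by
  rw [← t.factorThru_arrow g h, ← Preadditive.neg_comp]
  exact Subobject.factors_comp_arrow _

theorem exists_epi_decomp {X : C} (x y : Subobject X) {T : C} (g : T ⟶ X)
    (h : (x ⊔ y).Factors g) : ∃ (T' : C) (e : T' ⟶ T), Epi e ∧
      ∃ (u v : T' ⟶ X), x.Factors u ∧ y.Factors v ∧ e ≫ g = u + v := by
  set c : (x : C) ⊞ (y : C) ⟶ X := biprod.desc x.arrow y.arrow with hc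
  have hdesc : c = biprod.fst ≫ x.arrow + biprod.snd ≫ y.arrow := by
    ext <;> simp [hc]
  have hxc : x ≤ Subobject.mk (image.ι c) := by
    refine Subobject.le_mk_of_comm (biprod.inl ≫ factorThruImage c) ?_
    rw [Category.assoc, image.fac, hc, biprod.inl_desc]
  have hyc : y ≤ Subobject.mk (image.ι c) := by
    refine Subobject.le_mk_of_comm (biprod.inr ≫ factorThruImage c) ?_
    rw [Category.assoc, image.fac, hc, biprod.inr_desc]
  have himg : Subobject.mk (image.ι c) ≤ x ⊔ y := by
    rw [le_iff_factors]
    have h1 : (x ⊔ y).Factors c := by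
      have : c = biprod.desc (Subobject.ofLE x (x ⊔ y) le_sup_left)
          (Subobject.ofLE y (x ⊔ y) le_sup_right) ≫ (x ⊔ y).arrow := by
        ext <;> simp [hc, Subobject.ofLE_arrow]
      rw [this]
      exact Subobject.factors_comp_arrow _
    have h2 : (x ⊔ y).Factors (image.ι c) :=
      factors_of_epi_comp _ (factorThruImage c) _ (by rwa [image.fac])
    have h3 : (Subobject.mk (image.ι c)).arrow =
        (Subobject.underlyingIso (image.ι c)).hom ≫ image.ι c :=
      (Subobject.underlyingIso_hom_comp_eq_mk _).symm
    rw [h3]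
    exact Subobject.factors_of_factors_right _ h2
  have hsup_eq : x ⊔ y = Subobject.mk (image.ι c) := le_antisymm (sup_le hxc hyc) himg
  rw [hsup_eq] at h
  obtain ⟨κ, hκι⟩ : ∃ κ : T ⟶ image c, κ ≫ image.ι c = g :=
    ⟨(Subobject.mk (image.ι c)).factorThru g h ≫ (Subobject.underlyingIso (image.ι c)).hom, by
      rw [Category.assoc, Subobject.underlyingIso_hom_comp_eq_mk,
        Subobject.factorThru_arrow]⟩
  have hgen : ∀ {Q : C} (w : Q ⟶ (x : C) ⊞ (y : C)),
      w ≫ c = w ≫ biprod.fst ≫ x.arrow + w ≫ biprod.snd ≫ y.arrow := by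
    intro Q w
    rw [hdesc, Preadditive.comp_add]
  refine ⟨pullback (factorThruImage c) κ, pullback.snd _ _, inferInstance,
    pullback.fst _ _ ≫ biprod.fst ≫ x.arrow, pullback.fst _ _ ≫ biprod.snd ≫ y.arrow,
    ?_, ?_, ?_⟩
  · rw [← Category.assoc]
    exact Subobject.factors_comp_arrow _
  · rw [← Category.assoc]
    exact Subobject.factors_comp_arrow _
  · have h1 : pullback.snd (factorThruImage c) κ ≫ g =
        pullback.fst (factorThruImage c) κ ≫ c := by
      rw [← hκι, ← Category.assoc, ← pullback.condition, Category.assoc, image.fac]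
    rw [h1, hgen]

instance subobject_isModularLattice (X : C) : IsModularLattice (Subobject X) := by
  constructor
  intro x y z hxz
  rw [le_iff_factors]
  obtain ⟨T', e, he, u, v, hu, hv, heq⟩ := exists_epi_decomp x y ((x ⊔ y) ⊓ z).arrow
    (Subobject.factors_of_le _ inf_le_left (Subobject.factors_self _))
  haveI := he
  refine factors_of_epi_comp _ e _ ?_
  rw [heq]
  refine Subobject.factors_add _ _ (Subobject.sup_factors_of_factors_left hu) ?_
  refine Subobject.sup_factors_of_factors_right ((Subobject.inf_factors _).2 ⟨hv, ?_⟩)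
  have hvz : v = e ≫ ((x ⊔ y) ⊓ z).arrow + -u := by rw [heq]; abel
  rw [hvz]
  refine Subobject.factors_add _ _ ?_ (factors_neg _ _ (Subobject.factors_of_le _ hxz hu))
  exact Subobject.factors_of_factors_right _
    (Subobject.factors_of_le _ inf_le_right (Subobject.factors_self _))


end RRAux

namespace RRAux


section Emb

variable {M N : Type*} [Lattice M] [Lattice N]

theorem emb_inj (Ψ : M → N) (hemb : ∀ x y, Ψ x ≤ Ψ y ↔ x ≤ y) :
    Function.Injective Ψ := fun x y h =>
  le_antisymm ((hemb x y).1 h.le) ((hemb y x).1 h.ge)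

theorem emb_map_sup (Ψ : M → N) (hemb : ∀ x y, Ψ x ≤ Ψ y ↔ x ≤ y)
    (hex : ∃ z, Ψ z = Ψ x ⊔ Ψ y) : Ψ (x ⊔ y) = Ψ x ⊔ Ψ y := by
  obtain ⟨z, hz⟩ := hex
  have hxz : x ≤ z := (hemb x z).1 (hz ▸ le_sup_left)
  have hyz : y ≤ z := (hemb y z).1 (hz ▸ le_sup_right)
  refine le_antisymm ?_ (sup_le ((hemb x _).2 le_sup_left) ((hemb y _).2 le_sup_right))
  rw [← hz]
  exact (hemb _ _).2 (sup_le hxz hyz)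

theorem emb_map_inf (Ψ : M → N) (hemb : ∀ x y, Ψ x ≤ Ψ y ↔ x ≤ y)
    (hex : ∃ z, Ψ z = Ψ x ⊓ Ψ y) : Ψ (x ⊓ y) = Ψ x ⊓ Ψ y := by
  obtain ⟨z, hz⟩ := hex
  have hxz : z ≤ x := (hemb z x).1 (hz ▸ inf_le_left)
  have hyz : z ≤ y := (hemb z y).1 (hz ▸ inf_le_right)
  refine le_antisymm (le_inf ((hemb _ x).2 inf_le_left) ((hemb _ y).2 inf_le_right)) ?_
  rw [← hz]
  exact (hemb _ _).2 (le_inf hxz hyz)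

end Emb

section Bridges

variable {C : Type*} [Category C] [Abelian C]

/-- lattice embedding of subobjects along a mono -/
noncomputable def psiMono {A B : C} (ι : A ⟶ B) [Mono ι] : Subobject A → Subobject B :=
  fun x => ((Subobject.subobjectOrderIso (Subobject.mk ι))
    ((Subobject.mapIsoToOrderIso (Subobject.underlyingIso ι).symm) x) : Subobject B)

theorem psiMono_le_iff {A B : C} (ι : A ⟶ B) [Mono ι] (x y : Subobject A) :
    psiMono ι x ≤ psiMono ι y ↔ x ≤ y := by
  unfold psiMono
  rw [Subtype.coe_le_coe, OrderIso.le_iff_le, OrderIso.le_iff_le]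

theorem psiMono_le_mk {A B : C} (ι : A ⟶ B) [Mono ι] (x : Subobject A) :
    psiMono ι x ≤ Subobject.mk ι :=
  ((Subobject.subobjectOrderIso (Subobject.mk ι))
    ((Subobject.mapIsoToOrderIso (Subobject.underlyingIso ι).symm) x)).2

theorem psiMono_surj {A B : C} (ι : A ⟶ B) [Mono ι] (z : Subobject B)
    (hz : z ≤ Subobject.mk ι) : ∃ x, psiMono ι x = z := by
  refine ⟨(Subobject.mapIsoToOrderIso (Subobject.underlyingIso ι).symm).symm
    ((Subobject.subobjectOrderIso (Subobject.mk ι)).symm ⟨z, hz⟩), ?_⟩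
  unfold psiMono
  rw [OrderIso.apply_symm_apply, OrderIso.apply_symm_apply]

theorem psiMono_sup {A B : C} (ι : A ⟶ B) [Mono ι] (x y : Subobject A) :
    psiMono ι (x ⊔ y) = psiMono ι x ⊔ psiMono ι y :=
  emb_map_sup _ (psiMono_le_iff ι)
    (psiMono_surj ι _ (sup_le (psiMono_le_mk ι x) (psiMono_le_mk ι y)))

theorem psiMono_inf {A B : C} (ι : A ⟶ B) [Mono ι] (x y : Subobject A) :
    psiMono ι (x ⊓ y) = psiMono ι x ⊓ psiMono ι y :=
  emb_map_inf _ (psiMono_le_iff ι)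
    (psiMono_surj ι _ (inf_le_left.trans (psiMono_le_mk ι x)))

/-- lattice embedding of subobjects along an epi -/
noncomputable def psiEpi {B D : C} (g : B ⟶ D) [Epi g] : Subobject D → Subobject B :=
  fun y => (Abelian.subobjectIsoSubobjectOp B).symm (OrderDual.toDual
    (psiMono g.op (OrderDual.ofDual ((Abelian.subobjectIsoSubobjectOp D) y))))

theorem psiEpi_le_iff {B D : C} (g : B ⟶ D) [Epi g] (y y' : Subobject D) :
    psiEpi g y ≤ psiEpi g y' ↔ y ≤ y' := by
  unfold psiEpi
  rw [OrderIso.le_iff_le, OrderDual.toDual_le_toDual, psiMono_le_iff,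
    OrderDual.ofDual_le_ofDual, OrderIso.le_iff_le]

/-- the kernel element associated to an epi -/
noncomputable def kEpi {B D : C} (g : B ⟶ D) [Epi g] : Subobject B :=
  (Abelian.subobjectIsoSubobjectOp B).symm (OrderDual.toDual (Subobject.mk g.op))

theorem kEpi_le_psiEpi {B D : C} (g : B ⟶ D) [Epi g] (y : Subobject D) :
    kEpi g ≤ psiEpi g y := by
  unfold kEpi psiEpi
  exact (Abelian.subobjectIsoSubobjectOp B).symm.monotone
    (OrderDual.toDual_le_toDual.2 (psiMono_le_mk _ _))

theorem psiEpi_surj {B D : C} (g : B ⟶ D) [Epi g] (x : Subobject B)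
    (hx : kEpi g ≤ x) : ∃ y, psiEpi g y = x := by
  have hz : OrderDual.ofDual ((Abelian.subobjectIsoSubobjectOp B) x) ≤ Subobject.mk g.op := by
    have h1 := (Abelian.subobjectIsoSubobjectOp B).monotone hx
    rw [kEpi, OrderIso.apply_symm_apply] at h1
    exact h1
  obtain ⟨w, hw⟩ := psiMono_surj g.op _ hz
  refine ⟨(Abelian.subobjectIsoSubobjectOp D).symm (OrderDual.toDual w), ?_⟩
  unfold psiEpi
  rw [OrderIso.apply_symm_apply]
  show (Abelian.subobjectIsoSubobjectOp B).symm (OrderDual.toDual (psiMono g.op w)) = x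
  rw [hw]
  show (Abelian.subobjectIsoSubobjectOp B).symm
    (OrderDual.toDual (OrderDual.ofDual ((Abelian.subobjectIsoSubobjectOp B) x))) = x
  rw [OrderDual.toDual_ofDual, OrderIso.symm_apply_apply]

theorem psiEpi_sup {B D : C} (g : B ⟶ D) [Epi g] (x y : Subobject D) :
    psiEpi g (x ⊔ y) = psiEpi g x ⊔ psiEpi g y :=
  emb_map_sup _ (psiEpi_le_iff g)
    (psiEpi_surj g _ ((kEpi_le_psiEpi g x).trans le_sup_left))

theorem psiEpi_inf {B D : C} (g : B ⟶ D) [Epi g] (x y : Subobject D) :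
    psiEpi g (x ⊓ y) = psiEpi g x ⊓ psiEpi g y :=
  emb_map_inf _ (psiEpi_le_iff g)
    (psiEpi_surj g _ (le_inf (kEpi_le_psiEpi g x) (kEpi_le_psiEpi g y)))

theorem kEpi_le_mk_of_shortExact (S : ShortComplex C) (hS : S.ShortExact)
    [Mono S.f] [Epi S.g] : kEpi S.g ≤ Subobject.mk S.f := by
  set a := Subobject.mk S.f with ha
  have happ : (Abelian.subobjectIsoSubobjectOp S.X₂) a =
      OrderDual.toDual (Subobject.mk (cokernel.π S.f).op) := by
    rw [ha, Abelian.subobjectIsoSubobjectOp_apply]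
    show Subobject.lift _ _ (Subobject.mk S.f) = _
    exact Subobject.lift_mk _ _
  obtain ⟨l, hl⟩ := KernelFork.IsLimit.lift' hS.fIsKernel (kernel.ι S.g) (kernel.condition S.g)
  have hl' : l ≫ S.f = kernel.ι S.g := by simpa using hl
  have h0 : kernel.ι S.g ≫ cokernel.π S.f = 0 := by
    rw [← hl', Category.assoc, cokernel.condition, comp_zero]
  have hcomm : (Abelian.epiDesc S.g (cokernel.π S.f) h0).op ≫ S.g.op =
      (cokernel.π S.f).op := by
    rw [← op_comp, Abelian.comp_epiDesc]
  have key : Subobject.mk (cokernel.π S.f).op ≤ Subobject.mk S.g.op :=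
    Subobject.mk_le_mk_of_comm _ hcomm
  have : kEpi S.g ≤ (Abelian.subobjectIsoSubobjectOp S.X₂).symm
      ((Abelian.subobjectIsoSubobjectOp S.X₂) a) := by
    refine (Abelian.subobjectIsoSubobjectOp S.X₂).symm.monotone ?_
    rw [happ]
    exact OrderDual.toDual_le_toDual.2 key
  rwa [OrderIso.symm_apply_apply] at this

end Bridges


end RRAux

namespace RRAux

section MoreLattice

variable {M : Type*} [Lattice M]

theorem transport_back {N : Type*} [Lattice N] (Ψ : M → N)
    (hemb : ∀ x y, Ψ x ≤ Ψ y ↔ x ≤ y)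
    (hsup : ∀ x y, Ψ (x ⊔ y) = Ψ x ⊔ Ψ y) (hinf : ∀ x y, Ψ (x ⊓ y) = Ψ x ⊓ Ψ y)
    {n : ℕ} {F : Set (Fin n) → N} (hF : IsStrictCube F) (hrange : ∀ s, ∃ z, Ψ z = F s) :
    ∃ G : Set (Fin n) → M, IsStrictCube G := by
  choose G hG using hrange
  have hinj := emb_inj Ψ hemb
  refine ⟨G, fun s t h => hF.1 (by rw [← hG s, ← hG t, h]), fun s t => hinj ?_,
    fun s t => hinj ?_⟩
  · rw [hsup, hG, hG, hG, hF.2.1]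
  · rw [hinf, hG, hG, hG, hF.2.2]

theorem one_cube {x y : M} (hxy : x ≠ y) : ∃ f : Set (Fin 1) → M, IsStrictCube f := by
  classical
  have hle : x ⊓ y ≤ x ⊔ y := inf_le_left.trans le_sup_left
  refine ⟨fun s => if (0 : Fin 1) ∈ s then x ⊔ y else x ⊓ y, strictCube_of_laws ?_ ?_ ?_⟩
  · intro s t
    by_cases hs : (0 : Fin 1) ∈ s <;> by_cases ht : (0 : Fin 1) ∈ t <;>
      simp [Set.mem_union, hs, ht, sup_eq_left.2 hle, sup_eq_right.2 hle]
  · intro s t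
    by_cases hs : (0 : Fin 1) ∈ s <;> by_cases ht : (0 : Fin 1) ∈ t <;>
      simp [Set.mem_inter_iff, hs, ht, inf_eq_left.2 hle, inf_eq_right.2 hle]
  · intro i h
    have hi : i = 0 := Subsingleton.elim _ _
    rw [hi] at h
    simp only [Set.mem_singleton_iff, Set.mem_empty_iff_false, if_true, if_false] at h
    exact hxy (le_antisymm ((le_sup_left.trans h.le).trans inf_le_right)
      ((le_sup_right.trans h.le).trans inf_le_left))

theorem reducedRank_eq_zero_iff : reducedRank M = 0 ↔ ∀ x y : M, x = y := by
  constructor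
  · intro h x y
    by_contra hxy
    have h1 := le_reducedRank (one_cube hxy)
    rw [h] at h1
    simp at h1
  · intro h
    refine le_antisymm (reducedRank_le fun k hk => ?_) zero_le
    rcases k with - | k
    · simp
    · exfalso
      obtain ⟨f, hf⟩ := hk
      have : (∅ : Set (Fin (k + 1))) = Set.univ := hf.1 (h _ _)
      exact Set.empty_ne_univ this

theorem inf_distr (x y a : M) : x ⊓ y ⊓ a = (x ⊓ a) ⊓ (y ⊓ a) := by
  rw [inf_inf_inf_comm, inf_idem]

theorem sup_distr (x y a : M) : x ⊔ y ⊔ a = (x ⊔ a) ⊔ (y ⊔ a) := by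
  rw [sup_sup_sup_comm, sup_idem]

theorem cube_prod {M₁ M₂ : Type*} [OrderBot M] [IsModularLattice M] [Lattice M₁] [Lattice M₂]
    (Ψ₁ : M₁ → M) (Ψ₂ : M₂ → M) (a' c' : M) (hd : a' ⊓ c' = ⊥)
    (h₁emb : ∀ x y, Ψ₁ x ≤ Ψ₁ y ↔ x ≤ y)
    (h₁sup : ∀ x y, Ψ₁ (x ⊔ y) = Ψ₁ x ⊔ Ψ₁ y) (h₁inf : ∀ x y, Ψ₁ (x ⊓ y) = Ψ₁ x ⊓ Ψ₁ y)
    (h₁le : ∀ x, Ψ₁ x ≤ a')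
    (h₂emb : ∀ x y, Ψ₂ x ≤ Ψ₂ y ↔ x ≤ y)
    (h₂sup : ∀ x y, Ψ₂ (x ⊔ y) = Ψ₂ x ⊔ Ψ₂ y) (h₂inf : ∀ x y, Ψ₂ (x ⊓ y) = Ψ₂ x ⊓ Ψ₂ y)
    (h₂le : ∀ y, Ψ₂ y ≤ c')
    {p q : ℕ} {G : Set (Fin p) → M₁} (hG : IsStrictCube G)
    {H : Set (Fin q) → M₂} (hH : IsStrictCube H) :
    ∃ F : Set (Fin (p + q)) → M, IsStrictCube F := by
  refine ⟨fun s => Ψ₁ (G (Fin.castAdd q ⁻¹' s)) ⊔ Ψ₂ (H (Fin.natAdd p ⁻¹' s)),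
    strictCube_of_laws ?_ ?_ ?_⟩
  · intro s t
    show Ψ₁ (G (Fin.castAdd q ⁻¹' (s ∪ t))) ⊔ Ψ₂ (H (Fin.natAdd p ⁻¹' (s ∪ t))) = _
    rw [Set.preimage_union, Set.preimage_union, hG.2.1, hH.2.1, h₁sup, h₂sup,
      sup_sup_sup_comm]
  · intro s t
    show Ψ₁ (G (Fin.castAdd q ⁻¹' (s ∩ t))) ⊔ Ψ₂ (H (Fin.natAdd p ⁻¹' (s ∩ t))) = _
    rw [Set.preimage_inter, Set.preimage_inter, hG.2.2, hH.2.2, h₁inf, h₂inf]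
    exact (splice_inf hd (h₁le _) (h₁le _) (h₂le _) (h₂le _)).symm
  · intro i
    have hpre_empty₁ : Fin.castAdd q ⁻¹' (∅ : Set (Fin (p + q))) = ∅ := Set.preimage_empty
    have hpre_empty₂ : Fin.natAdd p ⁻¹' (∅ : Set (Fin (p + q))) = ∅ := Set.preimage_empty
    induction i using Fin.addCases with
    | left i₁ =>
      intro h
      have hK₁ : Fin.castAdd q ⁻¹' ({Fin.castAdd q i₁} : Set (Fin (p + q))) = {i₁} := by
        ext j
        simp only [Set.mem_preimage, Set.mem_singleton_iff]
        constructor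
        · intro hj
          have := congrArg Fin.val hj
          simp only [Fin.coe_castAdd] at this
          exact Fin.ext this
        · rintro rfl; rfl
      have hK₂ : Fin.natAdd p ⁻¹' ({Fin.castAdd q i₁} : Set (Fin (p + q))) = ∅ := by
        ext j
        simp only [Set.mem_preimage, Set.mem_singleton_iff, Set.mem_empty_iff_false,
          iff_false]
        intro hj
        have := congrArg Fin.val hj
        simp only [Fin.coe_natAdd, Fin.coe_castAdd] at this
        omega
      rw [hK₁, hK₂, hpre_empty₁, hpre_empty₂] at h
      have h' := congrArg (· ⊓ a') h
      rw [splice_inf_left hd (h₁le _) (h₂le _), splice_inf_left hd (h₁le _) (h₂le _)] at h'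
      exact Set.singleton_ne_empty i₁ (hG.1 (emb_inj Ψ₁ h₁emb h'))
    | right i₂ =>
      intro h
      have hK₁ : Fin.castAdd q ⁻¹' ({Fin.natAdd p i₂} : Set (Fin (p + q))) = ∅ := by
        ext j
        simp only [Set.mem_preimage, Set.mem_singleton_iff, Set.mem_empty_iff_false,
          iff_false]
        intro hj
        have := congrArg Fin.val hj
        simp only [Fin.coe_natAdd, Fin.coe_castAdd] at this
        omega
      have hK₂ : Fin.natAdd p ⁻¹' ({Fin.natAdd p i₂} : Set (Fin (p + q))) = {i₂} := by
        ext j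
        simp only [Set.mem_preimage, Set.mem_singleton_iff]
        constructor
        · intro hj
          have := congrArg Fin.val hj
          simp only [Fin.coe_natAdd] at this
          exact Fin.ext (by omega)
        · rintro rfl; rfl
      rw [hK₁, hK₂, hpre_empty₁, hpre_empty₂] at h
      have h' := congrArg (· ⊓ c') h
      rw [splice_inf_right hd (h₁le _) (h₂le _), splice_inf_right hd (h₁le _) (h₂le _)] at h'
      exact Set.singleton_ne_empty i₂ (hH.1 (emb_inj Ψ₂ h₂emb h'))

end MoreLattice

section ZeroAndDisjoint

open CategoryTheory.Limits

variable {C : Type*} [Category C] [Abelian C]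

theorem subobject_eq_of_isZero {A : C} (h : Limits.IsZero A) (x y : Subobject A) : x = y := by
  have key : ∀ u v : Subobject A, u ≤ v := by
    intro u v
    have hu : u.arrow = 0 := h.eq_of_tgt _ _
    exact Subobject.le_of_comm 0 (by rw [Limits.zero_comp, hu])
  exact le_antisymm (key x y) (key y x)

theorem isZero_of_subobject_subsingleton {A : C} (h : ∀ x y : Subobject A, x = y) :
    Limits.IsZero A := by
  by_contra hz
  obtain ⟨x, y, hxy⟩ := (Subobject.nontrivial_of_not_isZero hz).exists_pair_ne
  exact hxy (h x y)

theorem mk_arrow_comp_g_eq_zero (S : ShortComplex C) [Mono S.f] :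
    (Subobject.mk S.f).arrow ≫ S.g = 0 := by
  rw [← Subobject.underlyingIso_hom_comp_eq_mk S.f, Category.assoc, S.zero, comp_zero]

theorem disjoint_of_splitting (S : ShortComplex C) (spl : S.Splitting)
    [Mono S.f] [Mono spl.s] : Subobject.mk S.f ⊓ Subobject.mk spl.s = ⊥ := by
  refine le_bot_iff.1 ?_
  rw [le_iff_factors, Subobject.bot_factors_iff_zero]
  set w := Subobject.mk S.f ⊓ Subobject.mk spl.s with hw
  have h1 : w.arrow ≫ S.g = 0 := by
    rw [← Subobject.ofLE_arrow (inf_le_left : w ≤ Subobject.mk S.f), Category.assoc,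
      mk_arrow_comp_g_eq_zero, comp_zero]
  have h2 : w.arrow = (Subobject.ofLE _ _ (inf_le_right : w ≤ Subobject.mk spl.s)) ≫
      (Subobject.underlyingIso spl.s).hom ≫ spl.s := by
    rw [Subobject.underlyingIso_hom_comp_eq_mk, Subobject.ofLE_arrow]
  have h3 : (Subobject.ofLE _ _ (inf_le_right : w ≤ Subobject.mk spl.s)) ≫
      (Subobject.underlyingIso spl.s).hom = 0 := by
    have := h1
    rw [h2, Category.assoc, Category.assoc, spl.s_g, Category.comp_id] at this
    exact this
  rw [h2, ← Category.assoc, h3, Limits.zero_comp]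

end ZeroAndDisjoint

end RRAux
/-- Basic properties of the reduced rank of objects of an abelian category
(the reduced rank of an object being that of its subobject lattice):
monotonicity under epimorphisms and monomorphisms, subadditivity in short exact
sequences with equality in the split case, and vanishing exactly on zero objects. -/
theorem reducedRank_subobject_properties {C : Type*} [Category C] [Abelian C] :
    (∀ (A B : C) (f : A ⟶ B), Epi f →
      reducedRank (Subobject B) ≤ reducedRank (Subobject A)) ∧
    (∀ (A B : C) (f : A ⟶ B), Mono f →
      reducedRank (Subobject A) ≤ reducedRank (Subobject B)) ∧
    (∀ S : ShortComplex C, S.ShortExact →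
      reducedRank (Subobject S.X₂) ≤
        reducedRank (Subobject S.X₁) + reducedRank (Subobject S.X₃)) ∧
    (∀ S : ShortComplex C, S.ShortExact → Nonempty S.Splitting →
      reducedRank (Subobject S.X₂) =
        reducedRank (Subobject S.X₁) + reducedRank (Subobject S.X₃)) ∧
    (∀ A : C, reducedRank (Subobject A) = 0 ↔ Limits.IsZero A) := by
  classical
  have hepi : ∀ (A B : C) (f : A ⟶ B), Epi f →
      reducedRank (Subobject B) ≤ reducedRank (Subobject A) := by
    intro A B f hf
    haveI := hf
    refine RRAux.reducedRank_le_of_cubes fun k hk => ?_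
    obtain ⟨F, hF⟩ := hk
    exact ⟨_, RRAux.cube_comp hF (RRAux.psiEpi f) (fun s t => RRAux.psiEpi_sup f _ _)
      (fun s t => RRAux.psiEpi_inf f _ _)
      (fun s t h => RRAux.emb_inj _ (RRAux.psiEpi_le_iff f) h)⟩
  have hmono : ∀ (A B : C) (f : A ⟶ B), Mono f →
      reducedRank (Subobject A) ≤ reducedRank (Subobject B) := by
    intro A B f hf
    haveI := hf
    refine RRAux.reducedRank_le_of_cubes fun k hk => ?_
    obtain ⟨F, hF⟩ := hk
    exact ⟨_, RRAux.cube_comp hF (RRAux.psiMono f) (fun s t => RRAux.psiMono_sup f _ _)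
      (fun s t => RRAux.psiMono_inf f _ _)
      (fun s t h => RRAux.emb_inj _ (RRAux.psiMono_le_iff f) h)⟩
  have hses : ∀ S : ShortComplex C, S.ShortExact →
      reducedRank (Subobject S.X₂) ≤
        reducedRank (Subobject S.X₁) + reducedRank (Subobject S.X₃) := by
    intro S hS
    haveI := hS.mono_f
    haveI := hS.epi_g
    refine RRAux.reducedRank_le fun n hn => ?_
    obtain ⟨F, hF⟩ := hn
    set a := Subobject.mk S.f with ha
    have hbT : F ∅ ≤ F Set.univ := RRAux.cube_mono hF (Set.empty_subset _)
    have hbm : F ∅ ≤ F ∅ ⊔ a ⊓ F Set.univ := le_sup_left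
    have hmT : F ∅ ⊔ a ⊓ F Set.univ ≤ F Set.univ := sup_le hbT inf_le_right
    obtain ⟨p, q, G, H, hnpq, hG, hH, hGb, hHb⟩ := RRAux.core hF hbm hmT
    have hGT : ∀ s, G s ≤ F Set.univ := fun s => (hGb s).2.trans hmT
    have hGcube : IsStrictCube fun s => G s ⊓ a :=
      RRAux.cube_comp hG (· ⊓ a)
        (fun s t => RRAux.bot_sup_inf (hGb s).1 (hGb s).2 (hGT s) (hGb t).1 (hGb t).2 (hGT t))
        (fun s t => RRAux.inf_distr _ _ _)
        (fun s t h => by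
          rw [RRAux.bot_reconstruct (hGb s).1 (hGb s).2 (hGT s),
            RRAux.bot_reconstruct (hGb t).1 (hGb t).2 (hGT t)]
          show F ∅ ⊔ (· ⊓ a) (G s) = F ∅ ⊔ (· ⊓ a) (G t)
          simp only [h])
    obtain ⟨G', hG'⟩ := RRAux.transport_back (RRAux.psiMono S.f)
      (RRAux.psiMono_le_iff S.f) (RRAux.psiMono_sup S.f) (RRAux.psiMono_inf S.f)
      hGcube (fun s => RRAux.psiMono_surj S.f _ (by exact inf_le_right))
    have hHa : ∀ s, a ⊓ F Set.univ ≤ H s := fun s => le_sup_right.trans (hHb s).1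
    have hHT : ∀ s, H s ≤ F Set.univ := fun s => (hHb s).2
    have hHcube : IsStrictCube fun s => H s ⊔ a :=
      RRAux.cube_comp hH (· ⊔ a)
        (fun s t => RRAux.sup_distr _ _ _)
        (fun s t => RRAux.top_inf_sup (hHa s) (hHT s) (hHa t) (hHT t))
        (fun s t h => by
          rw [RRAux.top_reconstruct (hHa s) (hHT s), RRAux.top_reconstruct (hHa t) (hHT t)]
          show (· ⊔ a) (H s) ⊓ F Set.univ = (· ⊔ a) (H t) ⊓ F Set.univ
          simp only [h])
    have hk := RRAux.kEpi_le_mk_of_shortExact S hS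
    obtain ⟨H', hH'⟩ := RRAux.transport_back (RRAux.psiEpi S.g)
      (RRAux.psiEpi_le_iff S.g) (RRAux.psiEpi_sup S.g) (RRAux.psiEpi_inf S.g)
      hHcube (fun s => RRAux.psiEpi_surj S.g _ (hk.trans le_sup_right))
    calc (n : ℕ∞) ≤ ((p + q : ℕ) : ℕ∞) := by exact_mod_cast hnpq
      _ = (p : ℕ∞) + (q : ℕ∞) := Nat.cast_add _ _
      _ ≤ _ := add_le_add (RRAux.le_reducedRank ⟨G', hG'⟩) (RRAux.le_reducedRank ⟨H', hH'⟩)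
  refine ⟨hepi, hmono, hses, ?_, ?_⟩
  · rintro S hS ⟨spl⟩
    haveI := hS.mono_f
    haveI := hS.epi_g
    haveI : IsSplitMono spl.s := IsSplitMono.mk' ⟨S.g, spl.s_g⟩
    refine le_antisymm (hses S hS) ?_
    have hdisj := RRAux.disjoint_of_splitting S spl
    have hr1 : reducedRank (Subobject S.X₁) ≤ reducedRank (Subobject S.X₂) :=
      hmono _ _ S.f inferInstance
    have hr3 : reducedRank (Subobject S.X₃) ≤ reducedRank (Subobject S.X₂) :=
      hmono _ _ spl.s inferInstance
    rcases eq_or_ne (reducedRank (Subobject S.X₁)) ⊤ with h1 | h1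
    · have h2 : reducedRank (Subobject S.X₂) = ⊤ := top_le_iff.1 (h1 ▸ hr1)
      rw [h2]; exact le_top
    rcases eq_or_ne (reducedRank (Subobject S.X₃)) ⊤ with h3 | h3
    · have h2 : reducedRank (Subobject S.X₂) = ⊤ := top_le_iff.1 (h3 ▸ hr3)
      rw [h2]; exact le_top
    obtain ⟨pa, hpa⟩ := WithTop.ne_top_iff_exists.1 h1
    obtain ⟨qc, hqc⟩ := WithTop.ne_top_iff_exists.1 h3
    obtain ⟨G, hG⟩ := RRAux.exists_cube_of_le_rank (⊥ : Subobject S.X₁) hpa.le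
    obtain ⟨H, hH⟩ := RRAux.exists_cube_of_le_rank (⊥ : Subobject S.X₃) hqc.le
    obtain ⟨F, hFc⟩ := RRAux.cube_prod (RRAux.psiMono S.f) (RRAux.psiMono spl.s)
      (Subobject.mk S.f) (Subobject.mk spl.s) hdisj
      (RRAux.psiMono_le_iff S.f) (RRAux.psiMono_sup S.f) (RRAux.psiMono_inf S.f)
      (RRAux.psiMono_le_mk S.f)
      (RRAux.psiMono_le_iff spl.s) (RRAux.psiMono_sup spl.s) (RRAux.psiMono_inf spl.s)
      (RRAux.psiMono_le_mk spl.s) hG hH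
    calc reducedRank (Subobject S.X₁) + reducedRank (Subobject S.X₃)
        = ((pa + qc : ℕ) : ℕ∞) := by rw [← hpa, ← hqc, Nat.cast_add]; rfl
      _ ≤ reducedRank (Subobject S.X₂) := RRAux.le_reducedRank ⟨F, hFc⟩
  · intro A
    rw [RRAux.reducedRank_eq_zero_iff]
    exact ⟨RRAux.isZero_of_subobject_subsingleton,
      fun h x y => RRAux.subobject_eq_of_isZero h x y⟩
end

section
/- Let (M, ∨, ∧, ⊥) be a modular lattice with least element ⊥. Suppose there is no infinite independent sequence in M, i.e., there is no sequence a_1, a_2, a_3, … of elements strictly above ⊥ such that (a_1 ∨ ⋯ ∨ a_{k−1}) ∧ a_k = ⊥ for every k ≥ 2. Then: (a) for every a > ⊥ there exists a quasi-atom q with q ≤ a; and (b) there is a finite bound on the lengths of finite independent sequences in M. -/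
set_option linter.unusedSectionVars false
set_option maxHeartbeats 1000000

/-- A quasi-atom in a lower-bounded lattice: an element `q > ⊥` such that the
interval `(⊥, q]` is closed under meets. -/
def IsQuasiAtom {M : Type*} [Lattice M] [OrderBot M] (q : M) : Prop :=
  ⊥ < q ∧ ∀ x y : M, ⊥ < x → x ≤ q → ⊥ < y → y ≤ q → ⊥ < x ⊓ y

namespace QA
variable {M : Type*} [Lattice M] [OrderBot M] [IsModularLattice M]

def msup (l : List M) : M := (l : Multiset M).sup

@[simp] lemma msup_nil : msup ([] : List M) = ⊥ := rfl

@[simp] lemma msup_cons (x : M) (l : List M) : msup (x :: l) = x ⊔ msup l := by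
  simp [msup]

lemma msup_perm {l₁ l₂ : List M} (hp : l₁.Perm l₂) : msup l₁ = msup l₂ := by
  unfold msup; rw [Multiset.coe_eq_coe.mpr hp]

lemma le_msup {x : M} {l : List M} (hx : x ∈ l) : x ≤ msup l :=
  Multiset.le_sup (by simpa using hx)

/-- independence of a list, "last added" at the head -/
def Ind : List M → Prop
  | [] => True
  | x :: l => Ind l ∧ msup l ⊓ x = ⊥ ∧ ⊥ < x

@[simp] lemma ind_nil : Ind ([] : List M) := trivial

lemma modular_swap {s a b : M} (h1 : s ⊓ a = ⊥) (h2 : (s ⊔ a) ⊓ b = ⊥) :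
    (s ⊔ b) ⊓ a = ⊥ := by
  have key : (s ⊔ b) ⊓ (s ⊔ a) = s := by
    rw [sup_inf_assoc_of_le b (le_sup_left : s ≤ s ⊔ a), inf_comm b (s ⊔ a), h2, sup_bot_eq]
  have : (s ⊔ b) ⊓ a = ((s ⊔ b) ⊓ (s ⊔ a)) ⊓ a := by
    rw [inf_assoc, inf_eq_right.mpr (le_sup_right : a ≤ s ⊔ a)]
  rw [this, key, h1]

lemma ind_perm : ∀ {l₁ l₂ : List M}, l₁.Perm l₂ → Ind l₁ → Ind l₂ := by
  intro l₁ l₂ hp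
  induction hp with
  | nil => exact id
  | cons x h ih =>
    rintro ⟨h1, h2, h3⟩
    exact ⟨ih h1, by rwa [← msup_perm h], h3⟩
  | swap x y l =>
    rintro ⟨⟨h1, h2, h3⟩, h4, h5⟩
    rw [msup_cons] at h4
    refine ⟨⟨h1, ?_, h5⟩, ?_, h3⟩
    · exact le_bot_iff.mp (le_trans (inf_le_inf_right y (le_sup_right)) (le_of_eq (by rwa [sup_comm] at h4)))
    · rw [msup_cons]
      rw [sup_comm] at h4
      exact (sup_comm y (msup l)) ▸ modular_swap h2 h4
  | trans _ _ ih1 ih2 => exact ih2 ∘ ih1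

/-- x is essential in the interval [⊥, u] -/
def EssIn (x u : M) : Prop := x ≤ u ∧ ∀ w : M, ⊥ < w → w ≤ u → ⊥ < w ⊓ x

/-- globally essential -/
def Ess (b : M) : Prop := ∀ w : M, ⊥ < w → ⊥ < b ⊓ w

lemma not_lt_bot_iff {w : M} : ¬ ⊥ < w ↔ w = ⊥ := by
  constructor
  · intro hw; by_contra hne; exact hw (bot_lt_iff_ne_bot.mpr hne)
  · rintro rfl; exact lt_irrefl ⊥

lemma essIn_trans {x y z : M} (h1 : EssIn x y) (h2 : EssIn y z) : EssIn x z := by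
  refine ⟨h1.1.trans h2.1, fun w hw hwz => ?_⟩
  have h3 : ⊥ < w ⊓ y := h2.2 w hw hwz
  have h4 : ⊥ < (w ⊓ y) ⊓ x := h1.2 _ h3 inf_le_right
  exact lt_of_lt_of_le h4 (inf_le_inf_right x inf_le_left)

/-- core modular lemma -/
lemma essIn_sup_right {x u v : M} (hx : EssIn x u) (huv : u ⊓ v = ⊥) :
    EssIn (x ⊔ v) (u ⊔ v) := by
  obtain ⟨hxu, hess⟩ := hx
  refine ⟨sup_le_sup_right hxu v, fun w hw hwle => ?_⟩
  by_cases h1 : ⊥ < w ⊓ v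
  · exact lt_of_lt_of_le h1 (inf_le_inf_left w le_sup_right)
  have hwv : w ⊓ v = ⊥ := not_lt_bot_iff.mp h1
  have hc : ⊥ < (w ⊔ v) ⊓ u := by
    rcases eq_or_lt_of_le (bot_le : ⊥ ≤ (w ⊔ v) ⊓ u) with hc0 | hc
    · exfalso
      have hkey : (v ⊔ u) ⊓ (w ⊔ v) = v := by
        rw [sup_inf_assoc_of_le u (le_sup_right : v ≤ w ⊔ v), inf_comm u (w ⊔ v), ← hc0, sup_bot_eq]
      have hwv' : w ≤ v := by
        calc w ≤ (v ⊔ u) ⊓ (w ⊔ v) :=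
              le_inf (le_trans hwle (by rw [sup_comm])) le_sup_left
          _ = v := hkey
      have : w = ⊥ := by rw [← hwv]; exact (inf_eq_left.mpr hwv').symm
      exact absurd this (bot_lt_iff_ne_bot.mp hw)
    · exact hc
  have hd : ⊥ < ((w ⊔ v) ⊓ u) ⊓ x := hess _ hc inf_le_right
  set d := ((w ⊔ v) ⊓ u) ⊓ x with hd_def
  have hdx : d ≤ x := inf_le_right
  have hdu : d ≤ u := le_trans inf_le_left inf_le_right
  have hdwv : d ≤ w ⊔ v := le_trans inf_le_left inf_le_left
  by_cases he : ⊥ < (d ⊔ v) ⊓ w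
  · refine lt_of_lt_of_le he (le_inf inf_le_right ?_)
    exact le_trans inf_le_left (sup_le_sup_right hdx v)
  · exfalso
    have he0 : (d ⊔ v) ⊓ w = ⊥ := not_lt_bot_iff.mp he
    have hkey : (v ⊔ w) ⊓ (d ⊔ v) = v := by
      rw [sup_inf_assoc_of_le w (le_sup_right : v ≤ d ⊔ v), inf_comm w (d ⊔ v), he0, sup_bot_eq]
    have hdv : d ≤ v := by
      calc d ≤ (v ⊔ w) ⊓ (d ⊔ v) := le_inf (le_trans hdwv (by rw [sup_comm])) le_sup_left
        _ = v := hkey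
    have : d = ⊥ := le_bot_iff.mp (by rw [← huv]; exact le_inf hdu hdv)
    exact absurd this (bot_lt_iff_ne_bot.mp hd)

lemma essIn_sup {x u y v : M} (hx : EssIn x u) (hy : EssIn y v) (huv : u ⊓ v = ⊥) :
    EssIn (x ⊔ y) (u ⊔ v) := by
  have h1 : EssIn (x ⊔ v) (u ⊔ v) := essIn_sup_right hx huv
  have hvx : v ⊓ x = ⊥ := by
    rw [inf_comm]
    exact le_bot_iff.mp (le_trans (inf_le_inf_right v hx.1) huv.le)
  have h2 : EssIn (y ⊔ x) (v ⊔ x) := essIn_sup_right hy hvx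
  rw [sup_comm y x, sup_comm v x] at h2
  exact essIn_trans h2 h1

/-- joint essentiality over an independent list of quasi-atoms -/
lemma essIn_msup_map (b : M) :
    ∀ L : List M, Ind L → (∀ u ∈ L, IsQuasiAtom u) → (∀ u ∈ L, ⊥ < u ⊓ b) →
      EssIn (msup (L.map (· ⊓ b))) (msup L) := by
  intro L
  induction L with
  | nil =>
    intro _ _ _
    exact ⟨le_refl _, fun w hw hwle => absurd (le_bot_iff.mp hwle) (bot_lt_iff_ne_bot.mp hw)⟩
  | cons u L ih =>
    rintro ⟨h1, h2, h3⟩ hqa hmeet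
    have hIH : EssIn (msup (L.map (· ⊓ b))) (msup L) :=
      ih h1 (fun v hv => hqa v (List.mem_cons_of_mem u hv))
        (fun v hv => hmeet v (List.mem_cons_of_mem u hv))
    have hu : IsQuasiAtom u := hqa u (List.mem_cons_self)
    have hub : ⊥ < u ⊓ b := hmeet u (List.mem_cons_self)
    have huEss : EssIn (u ⊓ b) u := by
      refine ⟨inf_le_left, fun w hw hwle => ?_⟩
      exact hu.2 w (u ⊓ b) hw hwle hub inf_le_left
    have := essIn_sup hIH huEss h2
    simpa [msup_cons, sup_comm] using this

lemma ess_of_meets {L : List M} (hind : Ind L) (hqa : ∀ u ∈ L, IsQuasiAtom u)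
    (hLess : Ess (msup L)) {b : M} (hmeet : ∀ u ∈ L, ⊥ < u ⊓ b) : Ess b := by
  have hX := essIn_msup_map b L hind hqa hmeet
  have hXb : msup (L.map (· ⊓ b)) ≤ b := by
    apply Multiset.sup_le.mpr
    intro x hx
    simp only [msup, Multiset.mem_coe, List.mem_map] at hx ⊢
    obtain ⟨u, _, rfl⟩ := hx
    exact inf_le_right
  intro w hw
  have h1 : ⊥ < msup L ⊓ w := hLess w hw
  have h2 : ⊥ < (msup L ⊓ w) ⊓ msup (L.map (· ⊓ b)) := hX.2 _ h1 inf_le_left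
  calc ⊥ < (msup L ⊓ w) ⊓ msup (L.map (· ⊓ b)) := h2
    _ ≤ b ⊓ w := le_inf (le_trans inf_le_right hXb) (le_trans inf_le_left inf_le_right)

/-- main counting loop -/
lemma count_le {L : List M} (hindL : Ind L) (hqa : ∀ u ∈ L, IsQuasiAtom u)
    (hLess : Ess (msup L)) (hnd : L.Nodup) :
    ∀ X U : List M, Ind (X ++ U) → (∀ u ∈ U, u ∈ L) → U.Nodup →
      X.length + U.length ≤ L.length := by
  intro X
  induction X with
  | nil =>
    intro U _ hUL hUnd
    classical
    simp only [List.length_nil, Nat.zero_add]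
    calc U.length = U.toFinset.card := (List.toFinset_card_of_nodup hUnd).symm
      _ ≤ L.toFinset.card := Finset.card_le_card (by
          intro x hx
          rw [List.mem_toFinset] at hx ⊢
          exact hUL x hx)
      _ ≤ L.length := L.toFinset_card_le
  | cons x X' ih =>
    rintro U ⟨h1, h2, h3⟩ hUL hUnd
    simp only [List.append_eq] at h1 h2
    -- b := msup (X' ++ U) is not essential
    have hnotEss : ¬ Ess (msup (X' ++ U)) := by
      intro hEss
      have := hEss x h3
      rw [h2] at this
      exact lt_irrefl ⊥ this
    have hexu : ∃ u ∈ L, u ⊓ msup (X' ++ U) = ⊥ := by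
      by_contra hcon
      push_neg at hcon
      refine hnotEss (ess_of_meets hindL hqa hLess ?_)
      intro u hu
      exact bot_lt_iff_ne_bot.mpr (hcon u hu)
    obtain ⟨u, huL, hub⟩ := hexu
    have huq : IsQuasiAtom u := hqa u huL
    have huU : u ∉ U := by
      intro huU
      have : u ≤ msup (X' ++ U) := le_msup (by simp [huU])
      have : u = ⊥ := by rw [← hub]; exact (inf_eq_left.mpr this).symm
      exact absurd this (bot_lt_iff_ne_bot.mp huq.1)
    have hind2 : Ind (u :: (X' ++ U)) := ⟨h1, by rwa [inf_comm] at hub, huq.1⟩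
    have hind3 : Ind (X' ++ u :: U) := ind_perm (List.perm_middle).symm hind2
    have := ih (u :: U) hind3 (by
        intro v hv
        rcases List.mem_cons.mp hv with rfl | hv
        · exact huL
        · exact hUL v hv)
      (List.nodup_cons.mpr ⟨huU, hUnd⟩)
    simp only [List.length_cons] at this ⊢
    omega

/-- Part (a): existence of quasi-atoms -/
lemma exists_quasiAtom
    (h : ¬∃ a : ℕ → M, (∀ k, ⊥ < a k) ∧ ∀ k, (Finset.range k).sup a ⊓ a k = ⊥) :
    ∀ a : M, ⊥ < a → ∃ q : M, IsQuasiAtom q ∧ q ≤ a := by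
  by_contra hcon
  push_neg at hcon
  obtain ⟨a, ha, hno⟩ := hcon
  haveI : Nonempty (M × M) := ⟨(⊥, ⊥)⟩
  have key : ∀ c : M, ⊥ < c → c ≤ a →
      ∃ p : M × M, ⊥ < p.1 ∧ p.1 ≤ c ∧ ⊥ < p.2 ∧ p.2 ≤ c ∧ p.1 ⊓ p.2 = ⊥ := by
    intro c hc hca
    have hnq : ¬ IsQuasiAtom c := fun hq => (hno c hq) hca
    rw [IsQuasiAtom] at hnq
    push_neg at hnq
    obtain ⟨x, y, hx, hxc, hy, hyc, hxy⟩ := hnq hc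
    exact ⟨(x, y), hx, hxc, hy, hyc, not_lt_bot_iff.mp hxy⟩
  set P : M → M × M → Prop :=
    fun c p => ⊥ < p.1 ∧ p.1 ≤ c ∧ ⊥ < p.2 ∧ p.2 ≤ c ∧ p.1 ⊓ p.2 = ⊥ with hP
  let F : M → M × M := fun c => Classical.epsilon (P c)
  let b : ℕ → M := fun n => Nat.rec a (fun _ c => (F c).2) n
  let x : ℕ → M := fun n => (F (b n)).1
  have hb0 : b 0 = a := rfl
  have hbs : ∀ n, b (n + 1) = (F (b n)).2 := fun n => rfl
  have inv : ∀ n, ⊥ < b n ∧ b n ≤ a := by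
    intro n
    induction n with
    | zero => exact ⟨ha, le_refl a⟩
    | succ n ih =>
      have spec : P (b n) (F (b n)) := Classical.epsilon_spec (key (b n) ih.1 ih.2)
      rw [hbs n]
      exact ⟨spec.2.2.1, le_trans spec.2.2.2.1 ih.2⟩
  have spec : ∀ n, P (b n) (F (b n)) := fun n =>
    Classical.epsilon_spec (key (b n) (inv n).1 (inv n).2)
  have hxpos : ∀ n, ⊥ < x n := fun n => (spec n).1
  have hxb : ∀ n, x n ≤ b n := fun n => (spec n).2.1
  have hbsucc : ∀ n, b (n + 1) ≤ b n := fun n => by rw [hbs n]; exact (spec n).2.2.2.1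
  have hxbsucc : ∀ n, x n ⊓ b (n + 1) = ⊥ := fun n => by rw [hbs n]; exact (spec n).2.2.2.2
  have hSb : ∀ k, (Finset.range k).sup x ⊓ b k = ⊥ := by
    intro k
    induction k with
    | zero => simp
    | succ k ih =>
      have hrange : (Finset.range (k + 1)).sup x = x k ⊔ (Finset.range k).sup x := by
        rw [Finset.range_add_one, Finset.sup_insert]
      have hstep : (Finset.range (k + 1)).sup x ⊓ b k = x k := by
        rw [hrange, sup_inf_assoc_of_le _ (hxb k), ih, sup_bot_eq]
      have : (Finset.range (k + 1)).sup x ⊓ b (k + 1)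
          = ((Finset.range (k + 1)).sup x ⊓ b k) ⊓ b (k + 1) := by
        rw [inf_assoc, inf_eq_right.mpr (hbsucc k)]
      rw [this, hstep, hxbsucc k]
  exact h ⟨x, hxpos, fun k => le_bot_iff.mp
    (le_trans (inf_le_inf_left _ (hxb k)) (hSb k).le)⟩

/-- sup of an independent sequence of quasi-atoms -/
def GoodSup (E : M) : Prop :=
  ∃ n : ℕ, ∃ u : ℕ → M, (∀ i < n, IsQuasiAtom (u i)) ∧
    (∀ i < n, (Finset.range i).sup u ⊓ u i = ⊥) ∧ (Finset.range n).sup u = E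

/-- existence of a maximal independent family of quasi-atoms -/
lemma exists_maximal
    (h : ¬∃ a : ℕ → M, (∀ k, ⊥ < a k) ∧ ∀ k, (Finset.range k).sup a ⊓ a k = ⊥) :
    ∃ E : M, GoodSup E ∧ ∀ q : M, IsQuasiAtom q → E ⊓ q ≠ ⊥ := by
  by_contra hcon
  push_neg at hcon
  have Hc : ∀ E : M, GoodSup E → ∃ q : M, IsQuasiAtom q ∧ E ⊓ q = ⊥ := by
    intro E hE
    obtain ⟨q, hq1, hq2⟩ := hcon E hE
    exact ⟨q, hq1, hq2⟩
  haveI : Nonempty M := ⟨⊥⟩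
  let pick : M → M := fun E => Classical.epsilon (fun q => IsQuasiAtom q ∧ E ⊓ q = ⊥)
  let Es : ℕ → M := fun n => Nat.rec ⊥ (fun _ E => E ⊔ pick E) n
  let aseq : ℕ → M := fun n => pick (Es n)
  have hEs : ∀ n, Es (n + 1) = Es n ⊔ aseq n := fun n => rfl
  have P : ∀ n, (∀ i ≤ n, Es i = (Finset.range i).sup aseq) ∧
      (∀ i < n, IsQuasiAtom (aseq i) ∧ Es i ⊓ aseq i = ⊥) := by
    intro n
    induction n with
    | zero =>
      refine ⟨?_, fun i hi => absurd hi (Nat.not_lt_zero i)⟩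
      intro i hi
      interval_cases i
      simp [Es]
    | succ n ih =>
      have hgood : GoodSup (Es n) := by
        refine ⟨n, aseq, fun i hi => (ih.2 i hi).1, fun i hi => ?_, (ih.1 n le_rfl).symm⟩
        rw [← ih.1 i hi.le]
        exact (ih.2 i hi).2
      have spec : IsQuasiAtom (aseq n) ∧ Es n ⊓ aseq n = ⊥ :=
        Classical.epsilon_spec (Hc (Es n) hgood)
      constructor
      · intro i hi
        rcases Nat.lt_or_ge i (n + 1) with hi' | hi'
        · exact ih.1 i (Nat.lt_succ_iff.mp hi')
        · have : i = n + 1 := le_antisymm hi hi'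
          subst this
          rw [hEs n, ih.1 n le_rfl, Finset.range_add_one, Finset.sup_insert, sup_comm]
      · intro i hi
        rcases Nat.lt_or_ge i n with hi' | hi'
        · exact ih.2 i hi'
        · have : i = n := le_antisymm (Nat.lt_succ_iff.mp hi) hi'
          subst this
          exact spec
  refine h ⟨aseq, fun k => ((P (k + 1)).2 k (Nat.lt_succ_self k)).1.1, fun k => ?_⟩
  rw [← (P k).1 k le_rfl]
  exact ((P (k + 1)).2 k (Nat.lt_succ_self k)).2

def natList (b : ℕ → M) : ℕ → List M
  | 0 => []
  | n + 1 => b n :: natList b n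

@[simp] lemma natList_length (b : ℕ → M) (n : ℕ) : (natList b n).length = n := by
  induction n with
  | zero => rfl
  | succ n ih => simp [natList, ih]

lemma mem_natList {b : ℕ → M} {n : ℕ} {x : M} :
    x ∈ natList b n ↔ ∃ i < n, b i = x := by
  induction n with
  | zero => simp [natList]
  | succ n ih =>
    simp only [natList, List.mem_cons, ih]
    constructor
    · rintro (rfl | ⟨i, hi, rfl⟩)
      · exact ⟨n, Nat.lt_succ_self n, rfl⟩
      · exact ⟨i, Nat.lt_succ_of_lt hi, rfl⟩
    · rintro ⟨i, hi, rfl⟩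
      rcases Nat.lt_or_ge i n with hi' | hi'
      · exact Or.inr ⟨i, hi', rfl⟩
      · have : i = n := le_antisymm (Nat.lt_succ_iff.mp hi) hi'
        subst this; exact Or.inl rfl

lemma msup_natList (b : ℕ → M) (n : ℕ) : msup (natList b n) = (Finset.range n).sup b := by
  induction n with
  | zero => simp [natList]
  | succ n ih => rw [natList, msup_cons, ih, Finset.range_add_one, Finset.sup_insert]

lemma ind_natList {b : ℕ → M} {n : ℕ} (hpos : ∀ i < n, ⊥ < b i)
    (hind : ∀ i < n, (Finset.range i).sup b ⊓ b i = ⊥) : Ind (natList b n) := by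
  induction n with
  | zero => trivial
  | succ n ih =>
    refine ⟨ih (fun i hi => hpos i (Nat.lt_succ_of_lt hi))
      (fun i hi => hind i (Nat.lt_succ_of_lt hi)), ?_, hpos n (Nat.lt_succ_self n)⟩
    rw [msup_natList]
    exact hind n (Nat.lt_succ_self n)

lemma nodup_natList {b : ℕ → M} {n : ℕ} (hpos : ∀ i < n, ⊥ < b i)
    (hind : ∀ i < n, (Finset.range i).sup b ⊓ b i = ⊥) : (natList b n).Nodup := by
  induction n with
  | zero => simp [natList]
  | succ n ih =>
    rw [natList, List.nodup_cons]
    refine ⟨?_, ih (fun i hi => hpos i (Nat.lt_succ_of_lt hi))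
      (fun i hi => hind i (Nat.lt_succ_of_lt hi))⟩
    intro hmem
    obtain ⟨i, hi, hbi⟩ := mem_natList.mp hmem
    have h1 : b n ≤ (Finset.range n).sup b := by
      rw [← hbi]; exact Finset.le_sup (Finset.mem_range.mpr hi)
    have h2 : (Finset.range n).sup b ⊓ b n = b n := inf_eq_right.mpr h1
    rw [hind n (Nat.lt_succ_self n)] at h2
    exact absurd h2.symm (bot_lt_iff_ne_bot.mp (hpos n (Nat.lt_succ_self n)))

lemma fin_sup_eq {k : ℕ} (a : Fin k → M) (i : Fin k) :
    (Finset.range i.val).sup (fun m => if h : m < k then a ⟨m, h⟩ else ⊥)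
      = (Finset.univ.filter fun j => j < i).sup a := by
  apply le_antisymm
  · apply Finset.sup_le
    intro m hm
    have hmi : m < i.val := Finset.mem_range.mp hm
    have hmk : m < k := lt_trans hmi i.isLt
    rw [dif_pos hmk]
    exact Finset.le_sup (Finset.mem_filter.mpr ⟨Finset.mem_univ _, by
      rw [Fin.lt_def]; exact hmi⟩)
  · apply Finset.sup_le
    intro j hj
    have hji : j < i := (Finset.mem_filter.mp hj).2
    have hle := Finset.le_sup (f := fun m => if h : m < k then a ⟨m, h⟩ else ⊥)
      (Finset.mem_range.mpr (Fin.lt_def.mp hji))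
    simpa [j.isLt] using hle

end QA

/-- In a modular lattice with bottom element admitting no infinite independent
sequence: (a) below every nonzero element there is a quasi-atom, and (b) there is a
finite bound on the lengths of finite independent sequences. -/
theorem quasiAtoms_exist_and_independence_bounded
    {M : Type*} [Lattice M] [OrderBot M] [IsModularLattice M]
    (h : ¬∃ a : ℕ → M, (∀ k, ⊥ < a k) ∧ ∀ k, (Finset.range k).sup a ⊓ a k = ⊥) :
    (∀ a : M, ⊥ < a → ∃ q : M, IsQuasiAtom q ∧ q ≤ a) ∧
    (∃ N : ℕ, ∀ (k : ℕ) (a : Fin k → M), (∀ i, ⊥ < a i) →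
      (∀ i : Fin k, ((Finset.univ.filter fun j => j < i).sup a) ⊓ a i = ⊥) → k ≤ N) := by
  have parta := QA.exists_quasiAtom h
  refine ⟨parta, ?_⟩
  obtain ⟨E, ⟨n, u, hqa, hindu, hsupE⟩, hmax⟩ := QA.exists_maximal h
  refine ⟨n, fun k a hpos hindep => ?_⟩
  have hLind : QA.Ind (QA.natList u n) :=
    QA.ind_natList (fun i hi => (hqa i hi).1) hindu
  have hLqa : ∀ v ∈ QA.natList u n, IsQuasiAtom v := by
    intro v hv
    obtain ⟨i, hi, rfl⟩ := QA.mem_natList.mp hv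
    exact hqa i hi
  have hLnd : (QA.natList u n).Nodup :=
    QA.nodup_natList (fun i hi => (hqa i hi).1) hindu
  have hLsup : QA.msup (QA.natList u n) = E := by
    rw [QA.msup_natList]; exact hsupE
  have hLess : QA.Ess (QA.msup (QA.natList u n)) := by
    rw [hLsup]
    intro w hw
    obtain ⟨q, hq, hqw⟩ := parta w hw
    have h1 : ⊥ < E ⊓ q := bot_lt_iff_ne_bot.mpr (hmax q hq)
    exact lt_of_lt_of_le h1 (inf_le_inf_left E hqw)
  set bb : ℕ → M := fun m => if hm : m < k then a ⟨m, hm⟩ else ⊥ with hbb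
  have hbpos : ∀ m, m < k → ⊥ < bb m := by
    intro m hm
    have : bb m = a ⟨m, hm⟩ := by rw [hbb]; exact dif_pos hm
    rw [this]; exact hpos _
  have hbind : ∀ m, m < k → (Finset.range m).sup bb ⊓ bb m = ⊥ := by
    intro m hm
    have h1 : (Finset.range m).sup bb = (Finset.univ.filter fun j => j < (⟨m, hm⟩ : Fin k)).sup a :=
      QA.fin_sup_eq a ⟨m, hm⟩
    have h2 : bb m = a ⟨m, hm⟩ := by rw [hbb]; exact dif_pos hm
    rw [h1, h2]
    exact hindep ⟨m, hm⟩
  have hXind : QA.Ind (QA.natList bb k) := QA.ind_natList hbpos hbind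
  have hcount := QA.count_le hLind hLqa hLess hLnd (QA.natList bb k) []
    (by rwa [List.append_nil]) (by simp) List.nodup_nil
  simpa using hcount
end

section
/- Let M be a bounded modular lattice. (1) If q is a quasi-atom of M, then F_q := {x ∈ M : x ∧ q > ⊥} is a proper filter on M containing q. (2) Every proper filter on M containing q is contained in F_q; consequently F_q is a maximal proper filter. (3) If moreover rk_⊥(M) < ∞ (there is a finite bound on the sizes of strict cubes in M with base ⊥), then every maximal proper filter on M equals F_q for some quasi-atom q. -/
/-- A filter on a bounded lattice: contains `⊤`, closed under binary meets, and
upward closed. -/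
def IsLatFilter {M : Type*} [Lattice M] [BoundedOrder M] (F : Set M) : Prop :=
  ⊤ ∈ F ∧ (∀ x ∈ F, ∀ y ∈ F, x ⊓ y ∈ F) ∧ ∀ x ∈ F, ∀ y : M, x ≤ y → y ∈ F

lemma cube_of_seq {M : Type*} [Lattice M] [BoundedOrder M] [IsModularLattice M]
    (x c : ℕ → M) (hx : ∀ n, x (n+1) ≤ x n) (hc : ∀ n, c n ≤ x n)
    (hcb : ∀ n, ⊥ < c n) (hcx : ∀ n, c n ⊓ x (n+1) = ⊥) (k : ℕ) :
    ∃ f : Set (Fin k) → M, IsStrictCube f ∧ f ∅ = ⊥ := by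
  classical
  have hxa : Antitone x := antitone_nat_of_succ_le hx
  set g : Finset (Fin k) → M := fun A => A.sup (fun i => c (i : ℕ)) with hg
  have gle : ∀ (A : Finset (Fin k)) (m : ℕ), (∀ i ∈ A, m ≤ (i : ℕ)) → g A ≤ x m := by
    intro A m hA
    exact Finset.sup_le fun i hi => (hc i).trans (hxa (hA i hi))
  have hempty : ∀ (m : ℕ) (A : Finset (Fin k)), k ≤ m → (∀ i ∈ A, m ≤ (i : ℕ)) → A = ∅ := by
    intro m A hkm hA
    refine Finset.eq_empty_of_forall_notMem fun i hi => ?_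
    have := hA i hi
    have := i.2
    omega
  have key : ∀ (d m : ℕ) (A B : Finset (Fin k)), k - m ≤ d →
      (∀ i ∈ A, m ≤ (i : ℕ)) → (∀ i ∈ B, m ≤ (i : ℕ)) → g A ⊓ g B = g (A ∩ B) := by
    intro d
    induction d with
    | zero =>
      intro m A B hd hA hB
      have hkm : k ≤ m := by omega
      rw [hempty m A hkm hA, hempty m B hkm hB]
      simp [hg]
    | succ d ih =>
      intro m A B hd hA hB
      by_cases hkm : k ≤ m
      · rw [hempty m A hkm hA, hempty m B hkm hB]; simp [hg]
      · push_neg at hkm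
        have hμ : (⟨m, hkm⟩ : Fin k) = ⟨m, hkm⟩ := rfl
        generalize hμdef : (⟨m, hkm⟩ : Fin k) = μ at *
        have hμval : (μ : ℕ) = m := by rw [← hμdef]
        have hA'm : ∀ i ∈ A.erase μ, m + 1 ≤ (i : ℕ) := by
          intro i hi
          rw [Finset.mem_erase] at hi
          have h1 := hA i hi.2
          have h2 : (i : ℕ) ≠ m := fun h => hi.1 (Fin.ext (by rw [h, hμval]))
          omega
        have hB'm : ∀ i ∈ B.erase μ, m + 1 ≤ (i : ℕ) := by
          intro i hi
          rw [Finset.mem_erase] at hi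
          have h1 := hB i hi.2
          have h2 : (i : ℕ) ≠ m := fun h => hi.1 (Fin.ext (by rw [h, hμval]))
          omega
        have hAB' : g (A.erase μ) ⊓ g (B.erase μ) = g (A.erase μ ∩ B.erase μ) :=
          ih (m+1) _ _ (by omega) hA'm hB'm
        have hA'le : g (A.erase μ) ≤ x (m+1) := gle _ (m+1) hA'm
        have hB'le : g (B.erase μ) ≤ x (m+1) := gle _ (m+1) hB'm
        have hcm : c m ⊓ x (m+1) = ⊥ := hcx m
        have shape2 : ∀ Z W : M, Z ≤ x (m+1) → W ≤ x (m+1) → (c m ⊔ Z) ⊓ W = Z ⊓ W := by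
          intro Z W hZ hW
          have h1 : (c m ⊔ Z) ⊓ x (m+1) = Z := by
            rw [sup_comm, sup_inf_assoc_of_le (c m) hZ, hcm, sup_bot_eq]
          calc (c m ⊔ Z) ⊓ W = (c m ⊔ Z) ⊓ (x (m+1) ⊓ W) := by rw [inf_eq_right.2 hW]
            _ = ((c m ⊔ Z) ⊓ x (m+1)) ⊓ W := by rw [inf_assoc]
            _ = Z ⊓ W := by rw [h1]
        have ginsert : ∀ C : Finset (Fin k), g (insert μ C) = c m ⊔ g C := by
          intro C
          rw [hg]
          simp only [Finset.sup_insert]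
          rw [hμval]
        have hEE : A.erase μ ∩ B.erase μ = (A ∩ B).erase μ := by
          ext i
          simp only [Finset.mem_inter, Finset.mem_erase]
          tauto
        by_cases hμA : μ ∈ A <;> by_cases hμB : μ ∈ B
        · have gA : g A = c m ⊔ g (A.erase μ) := by
            conv_lhs => rw [← Finset.insert_erase hμA]
            exact ginsert _
          have gB : g B = c m ⊔ g (B.erase μ) := by
            conv_lhs => rw [← Finset.insert_erase hμB]
            exact ginsert _
          have gAB : g (A ∩ B) = c m ⊔ g (A.erase μ ∩ B.erase μ) := by
            conv_lhs => rw [← Finset.insert_erase (Finset.mem_inter.2 ⟨hμA, hμB⟩), ← hEE]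
            exact ginsert _
          rw [gA, gB, gAB, ← hAB']
          rw [sup_inf_assoc_of_le (g (A.erase μ)) le_sup_left]
          rw [inf_comm (g (A.erase μ)), shape2 _ _ hB'le hA'le, inf_comm (g (B.erase μ))]
        · have gA : g A = c m ⊔ g (A.erase μ) := by
            conv_lhs => rw [← Finset.insert_erase hμA]
            exact ginsert _
          have hBe : B.erase μ = B := Finset.erase_eq_of_notMem hμB
          have hABe : A ∩ B = A.erase μ ∩ B.erase μ := by
            rw [hEE, Finset.erase_eq_of_notMem (fun h => hμB (Finset.mem_inter.1 h).2)]
          rw [gA, hABe, ← hAB', hBe]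
          exact shape2 _ _ hA'le (hBe ▸ hB'le)
        · have gB : g B = c m ⊔ g (B.erase μ) := by
            conv_lhs => rw [← Finset.insert_erase hμB]
            exact ginsert _
          have hAe : A.erase μ = A := Finset.erase_eq_of_notMem hμA
          have hABe : A ∩ B = A.erase μ ∩ B.erase μ := by
            rw [hEE, Finset.erase_eq_of_notMem (fun h => hμA (Finset.mem_inter.1 h).1)]
          rw [gB, hABe, ← hAB', hAe, inf_comm (g A), inf_comm (g A)]
          exact shape2 _ _ hB'le (hAe ▸ hA'le)
        · have hAe : A.erase μ = A := Finset.erase_eq_of_notMem hμA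
          have hBe : B.erase μ = B := Finset.erase_eq_of_notMem hμB
          rw [← hAe, ← hBe, hAB']
  -- now assemble the cube
  refine ⟨fun s => g (Set.toFinite s).toFinset, ⟨?_, ?_, ?_⟩, ?_⟩
  · -- injective
    have hsub : ∀ s t : Set (Fin k),
        g (Set.toFinite s).toFinset = g (Set.toFinite t).toFinset → s ⊆ t := by
      intro s t hst i hi
      by_contra hit
      have h1 : c (i : ℕ) ≤ g (Set.toFinite s).toFinset := by
        refine Finset.le_sup (f := fun j => c ((j : Fin k) : ℕ)) ?_
        rwa [Set.Finite.mem_toFinset]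
      rw [hst] at h1
      have h2 : g {i} ⊓ g (Set.toFinite t).toFinset = g ({i} ∩ (Set.toFinite t).toFinset) :=
        key k 0 _ _ (by omega) (fun _ _ => Nat.zero_le _) (fun _ _ => Nat.zero_le _)
      have h3 : ({i} : Finset (Fin k)) ∩ (Set.toFinite t).toFinset = ∅ := by
        ext j
        simp only [Finset.mem_inter, Finset.mem_singleton, Set.Finite.mem_toFinset,
          Finset.notMem_empty, iff_false]
        rintro ⟨rfl, hj⟩
        exact hit hj
      have h4 : g ({i} : Finset (Fin k)) = c (i : ℕ) := Finset.sup_singleton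
      rw [h3, h4] at h2
      have : c (i : ℕ) = ⊥ := by
        rw [inf_eq_left.2 h1] at h2
        simpa [hg] using h2
      exact absurd this (hcb (i : ℕ)).ne'
    intro s t hst
    exact Set.Subset.antisymm (hsub s t hst) (hsub t s hst.symm)
  · -- union
    intro s t
    show g (Set.toFinite (s ∪ t)).toFinset =
      g (Set.toFinite s).toFinset ⊔ g (Set.toFinite t).toFinset
    have h : (Set.toFinite (s ∪ t)).toFinset =
        (Set.toFinite s).toFinset ∪ (Set.toFinite t).toFinset := by
      ext i
      simp only [Set.Finite.mem_toFinset, Finset.mem_union]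
      exact Iff.rfl
    rw [h, hg]
    exact Finset.sup_union
  · -- inter
    intro s t
    show g (Set.toFinite (s ∩ t)).toFinset =
      g (Set.toFinite s).toFinset ⊓ g (Set.toFinite t).toFinset
    have h2 := key k 0 (Set.toFinite s).toFinset (Set.toFinite t).toFinset (by omega)
      (fun _ _ => Nat.zero_le _) (fun _ _ => Nat.zero_le _)
    have h : (Set.toFinite (s ∩ t)).toFinset =
        (Set.toFinite s).toFinset ∩ (Set.toFinite t).toFinset := by
      ext i
      simp only [Set.Finite.mem_toFinset, Finset.mem_inter]
      exact Iff.rfl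
    rw [h, ← h2]
  · -- base
    show g (Set.toFinite (∅ : Set (Fin k))).toFinset = ⊥
    have h : (Set.toFinite (∅ : Set (Fin k))).toFinset = ∅ := by
      ext i
      simp only [Set.Finite.mem_toFinset, Finset.notMem_empty, iff_false]
      exact fun h => h
    rw [h]
    simp [hg]

/-- In a bounded modular lattice: for a quasi-atom `q`, the set
`F_q = {x | x ⊓ q > ⊥}` is a proper filter containing `q`; every proper filter
containing `q` is contained in `F_q`, and `F_q` is a maximal proper filter; and if
there is a finite bound on the sizes of strict cubes with base `⊥`, then every
maximal proper filter is of the form `F_q` for some quasi-atom `q`. -/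
theorem quasiAtom_filters
    {M : Type*} [Lattice M] [BoundedOrder M] [IsModularLattice M] :
    (∀ q : M, IsQuasiAtom q →
      IsLatFilter {x : M | ⊥ < x ⊓ q} ∧ (⊥ : M) ∉ {x : M | ⊥ < x ⊓ q} ∧
        q ∈ {x : M | ⊥ < x ⊓ q}) ∧
    (∀ q : M, IsQuasiAtom q → ∀ F : Set M, IsLatFilter F → (⊥ : M) ∉ F → q ∈ F →
      F ⊆ {x : M | ⊥ < x ⊓ q}) ∧
    (∀ q : M, IsQuasiAtom q → ∀ G : Set M, IsLatFilter G → (⊥ : M) ∉ G →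
      {x : M | ⊥ < x ⊓ q} ⊆ G → G = {x : M | ⊥ < x ⊓ q}) ∧
    ((∃ N : ℕ, ∀ (k : ℕ) (f : Set (Fin k) → M), IsStrictCube f → f ∅ = ⊥ → k ≤ N) →
      ∀ F : Set M, IsLatFilter F → (⊥ : M) ∉ F →
        (∀ G : Set M, IsLatFilter G → (⊥ : M) ∉ G → F ⊆ G → G = F) →
        ∃ q : M, IsQuasiAtom q ∧ F = {x : M | ⊥ < x ⊓ q}) := by
  -- Part 1
  have part1 : ∀ q : M, IsQuasiAtom q →
      IsLatFilter {x : M | ⊥ < x ⊓ q} ∧ (⊥ : M) ∉ {x : M | ⊥ < x ⊓ q} ∧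
        q ∈ {x : M | ⊥ < x ⊓ q} := by
    intro q hq
    refine ⟨⟨?_, ?_, ?_⟩, ?_, ?_⟩
    · show ⊥ < ⊤ ⊓ q
      rw [top_inf_eq]
      exact hq.1
    · intro a ha b hb
      show ⊥ < (a ⊓ b) ⊓ q
      have h := hq.2 (a ⊓ q) (b ⊓ q) ha inf_le_right hb inf_le_right
      refine lt_of_lt_of_le h (le_inf (le_inf ?_ ?_) ?_)
      · exact inf_le_left.trans inf_le_left
      · exact inf_le_right.trans inf_le_left
      · exact inf_le_left.trans inf_le_right
    · intro a ha b hab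
      exact lt_of_lt_of_le ha (inf_le_inf_right q hab)
    · show ¬ ⊥ < ⊥ ⊓ q
      simp
    · show ⊥ < q ⊓ q
      rw [inf_idem]
      exact hq.1
  -- Part 2
  have part2 : ∀ q : M, IsQuasiAtom q → ∀ F : Set M, IsLatFilter F → (⊥ : M) ∉ F → q ∈ F →
      F ⊆ {x : M | ⊥ < x ⊓ q} := by
    intro q _ F hF hFb hqF a ha
    have h1 : a ⊓ q ∈ F := hF.2.1 a ha q hqF
    have h2 : a ⊓ q ≠ ⊥ := fun h => hFb (h ▸ h1)
    exact bot_lt_iff_ne_bot.2 h2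
  refine ⟨part1, part2, ?_, ?_⟩
  -- Part 3
  · intro q hq G hG hGb hsub
    refine Set.Subset.antisymm ?_ hsub
    exact part2 q hq G hG hGb (hsub (part1 q hq).2.2)
  -- Part 4
  · intro hN F hF hFb hmax
    by_contra hcon
    push_neg at hcon
    set D : M → Prop := fun a => ∀ f ∈ F, ⊥ < a ⊓ f with hD
    have hDtop : D ⊤ := by
      intro f hf
      rw [top_inf_eq]
      exact bot_lt_iff_ne_bot.2 (fun h => hFb (h ▸ hf))
    have hDbot : ∀ a, D a → ⊥ < a := fun a ha => lt_of_lt_of_le (ha ⊤ hF.1) inf_le_left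
    have hnoqa : ∀ q, D q → ¬ IsQuasiAtom q := by
      intro q hq hqa
      have hsub : F ⊆ {x : M | ⊥ < x ⊓ q} := by
        intro f hf
        have := hq f hf
        rwa [inf_comm] at this
      have := hmax {x : M | ⊥ < x ⊓ q} (part1 q hqa).1 (part1 q hqa).2.1 hsub
      exact hcon q hqa this.symm
    have step : ∀ a, D a → ∃ p : M × M,
        D p.1 ∧ p.1 ≤ a ∧ ⊥ < p.2 ∧ p.2 ≤ a ∧ p.2 ⊓ p.1 = ⊥ := by
      intro a ha
      have hbot : ⊥ < a := hDbot a ha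
      have hnq := hnoqa a ha
      rw [IsQuasiAtom] at hnq
      push_neg at hnq
      obtain ⟨u, v, hu, hua, hv, hva, huv⟩ := hnq hbot
      have huv' : u ⊓ v = ⊥ := by
        by_contra h
        exact huv (bot_lt_iff_ne_bot.2 h)
      by_cases hu' : D u
      · exact ⟨(u, v), hu', hua, hv, hva, by rw [inf_comm]; exact huv'⟩
      · have hu2 : ∃ w ∈ F, ¬ ⊥ < u ⊓ w := by
          by_contra h
          push_neg at h
          exact hu' h
        obtain ⟨w, hwF, hw⟩ := hu2
        have hw' : u ⊓ w = ⊥ := by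
          by_contra h
          exact hw (bot_lt_iff_ne_bot.2 h)
        refine ⟨(a ⊓ w, u), ?_, inf_le_left, hu, hua, ?_⟩
        · intro f hf
          rw [inf_assoc]
          exact ha _ (hF.2.1 w hwF f hf)
        · refine le_antisymm ?_ bot_le
          calc u ⊓ (a ⊓ w) ≤ u ⊓ w := inf_le_inf_left u inf_le_right
            _ = ⊥ := hw'
    choose nxt h1 h2 h3 h4 h5 using step
    let seq : ℕ → {a : M // D a} := fun n =>
      Nat.rec ⟨⊤, hDtop⟩ (fun _ p => ⟨(nxt p.1 p.2).1, h1 p.1 p.2⟩) n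
    set xs : ℕ → M := fun n => (seq n).1 with hxs
    set cs : ℕ → M := fun n => (nxt (seq n).1 (seq n).2).2 with hcs
    have hxstep : ∀ n, xs (n+1) ≤ xs n := fun n => h2 (seq n).1 (seq n).2
    have hcle : ∀ n, cs n ≤ xs n := fun n => h4 (seq n).1 (seq n).2
    have hcbot : ∀ n, ⊥ < cs n := fun n => h3 (seq n).1 (seq n).2
    have hcxb : ∀ n, cs n ⊓ xs (n+1) = ⊥ := fun n => h5 (seq n).1 (seq n).2
    obtain ⟨N, hNb⟩ := hN
    obtain ⟨f, hfc, hfbot⟩ := cube_of_seq xs cs hxstep hcle hcbot hcxb (N+1)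
    have := hNb (N+1) f hfc hfbot
    omega
end

section
/- Let K be a field and O a valuation subring of K with maximal ideal 𝔪 and residue field k = O/𝔪. For a K-linear subspace V ≤ K^n define ς_n(V) := ((V ∩ O^n) + 𝔪^n)/𝔪^n ≤ k^n, the image of V ∩ O^n under the coordinatewise residue map O^n → k^n. Then: (1) each ς_n is inclusion-preserving; (2) ς_{n+m}(V ⊕ W) = ς_n(V) ⊕ ς_m(W) for V ≤ K^n, W ≤ K^m; (3) for every μ ∈ GL_n(O), ς_n(μ·V) = μ̄·ς_n(V), where μ̄ ∈ GL_n(k) is the entrywise residue of μ; (4) dim_k ς_n(V) = dim_K V for every V ≤ K^n. -/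
/-- The "direct sum" of a submodule of `Fin n → N` and a submodule of `Fin m → N`,
as a submodule of `Fin (n+m) → N`, under the standard identification. -/
def Submodule.finDSum {S N : Type*} [Ring S] [AddCommGroup N] [Module S N] {n m : ℕ}
    (V : Submodule S (Fin n → N)) (W : Submodule S (Fin m → N)) :
    Submodule S (Fin (n + m) → N) where
  carrier := {x | (fun i => x (Fin.castAdd m i)) ∈ V ∧ (fun j => x (Fin.natAdd n j)) ∈ W}
  add_mem' := by
    rintro x y ⟨hx1, hx2⟩ ⟨hy1, hy2⟩
    exact ⟨V.add_mem hx1 hy1, W.add_mem hx2 hy2⟩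
  zero_mem' := ⟨V.zero_mem, W.zero_mem⟩
  smul_mem' := by
    rintro c x ⟨hx1, hx2⟩
    exact ⟨V.smul_mem c hx1, W.smul_mem c hx2⟩

/-- The 1-inflator associated to a valuation subring `O` of `K`:
`ς_n(V) = ((V ∩ O^n) + 𝔪^n)/𝔪^n`, i.e. the image of `V ∩ O^n` under the
coordinatewise residue map `O^n → k^n`. -/
noncomputable def valInflator {K : Type*} [Field K] (O : ValuationSubring K) (n : ℕ)
    (V : Submodule K (Fin n → K)) :
    Submodule (IsLocalRing.ResidueField O) (Fin n → IsLocalRing.ResidueField O) :=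
  Submodule.span _ {w | ∃ x : Fin n → O, (fun i => (x i : K)) ∈ V ∧
    w = fun i => IsLocalRing.residue O (x i)}


open IsLocalRing


section Aux

variable {K : Type*} [Field K] (O : ValuationSubring K)

private lemma exists_dominant {ι : Type*} [Fintype ι] [Nonempty ι] (a : ι → K) :
    ∃ j, ∀ i, O.valuation (a i) ≤ O.valuation (a j) := by
  obtain ⟨j, -, hj⟩ := Finset.exists_max_image Finset.univ (fun i => O.valuation (a i))
    ⟨Classical.arbitrary ι, Finset.mem_univ _⟩
  exact ⟨j, fun i => hj i (Finset.mem_univ i)⟩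

private lemma div_mem' {x y : K} (h : O.valuation x ≤ O.valuation y) (hy : y ≠ 0) :
    y⁻¹ * x ∈ O := by
  apply O.mem_of_valuation_le_one
  have hy0 : O.valuation y ≠ 0 := (Valuation.ne_zero_iff _).2 hy
  rw [map_mul, map_inv₀]
  calc (O.valuation y)⁻¹ * O.valuation x ≤ (O.valuation y)⁻¹ * O.valuation y :=
        mul_le_mul_right h _
    _ = 1 := inv_mul_cancel₀ hy0

/-- If `t ∉ O` then `t⁻¹` is in the maximal ideal of `O`. -/
private lemma inv_mem_maximalIdeal {t : K} (ht : t ∉ O) (hmem : t⁻¹ ∈ O) :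
    (⟨t⁻¹, hmem⟩ : O) ∈ maximalIdeal O := by
  rw [mem_maximalIdeal, mem_nonunits_iff]
  rintro ⟨u, hu⟩
  apply ht
  have h1 : ((u⁻¹ : Oˣ) : O) * ⟨t⁻¹, hmem⟩ = 1 := by rw [← hu]; exact u.inv_mul
  have h2 : (((u⁻¹ : Oˣ) : O) : K) * t⁻¹ = 1 := by
    have := congrArg (fun z : O => (z : K)) h1
    push_cast at this ⊢
    exact this
  have : (((u⁻¹ : Oˣ) : O) : K) = t := by
    rw [eq_inv_of_mul_eq_one_left h2, inv_inv]
  rw [← this]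
  exact SetLike.coe_mem _

private lemma coeff_mem {n d : ℕ} (b : Fin d → (Fin n → O))
    (hli : LinearIndependent (ResidueField O) (fun i => fun c => residue O (b i c)))
    (a : Fin d → K) (hx : ∀ c, (∑ i, a i * (b i c : K)) ∈ O) : ∀ i, a i ∈ O := by
  by_contra h
  push_neg at h
  obtain ⟨i0, hi0⟩ := h
  have : Nonempty (Fin d) := ⟨i0⟩
  obtain ⟨j, hj⟩ := exists_dominant O a
  have hajO : a j ∉ O := fun hO =>
    hi0 (O.mem_of_valuation_le_one _ (le_trans (hj i0) ((O.valuation_le_one_iff _).2 hO)))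
  have haj0 : a j ≠ 0 := by rintro h0; exact hajO (h0 ▸ O.zero_mem)
  have hinvO : (a j)⁻¹ ∈ O := (O.mem_or_inv_mem (a j)).resolve_left hajO
  have hc : ∀ i, (a j)⁻¹ * a i ∈ O := fun i => div_mem' O (hj i) haj0
  set cO : Fin d → O := fun i => ⟨(a j)⁻¹ * a i, hc i⟩ with hcO
  set s : Fin n → O := fun c => ∑ i, cO i * b i c with hs
  have hsm : ∀ c, s c ∈ maximalIdeal O := by
    intro c
    have : s c = (⟨(a j)⁻¹, hinvO⟩ : O) * ⟨∑ i, a i * (b i c : K), hx c⟩ := by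
      apply Subtype.ext
      push_cast [hs, hcO]
      rw [Finset.mul_sum]
      exact Finset.sum_congr rfl fun i _ => by ring
    rw [this]
    exact Ideal.mul_mem_right _ _ (inv_mem_maximalIdeal O hajO hinvO)
  have hres : ∑ i, residue O (cO i) • (fun c => residue O (b i c)) = 0 := by
    funext c
    simp only [Finset.sum_apply, Pi.smul_apply, Pi.zero_apply, smul_eq_mul]
    simp only [← map_mul, ← map_sum]
    exact (residue_eq_zero_iff _).2 (hsm c)
  have := (Fintype.linearIndependent_iff.1 hli) (fun i => residue O (cO i)) hres j
  apply one_ne_zero (α := ResidueField O)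
  rw [← this]
  have : cO j = 1 := Subtype.ext (by push_cast [hcO]; exact inv_mul_cancel₀ haj0)
  rw [this, map_one]

end Aux

section Adapt

variable {K : Type*} [Field K] (O : ValuationSubring K)

private lemma exists_adapted (n : ℕ) : ∀ (d : ℕ) (V : Submodule K (Fin n → K)),
    Module.finrank K V = d →
    ∃ b : Fin d → (Fin n → O),
      (∀ i, (fun c => ((b i c : K))) ∈ V) ∧
      (V ≤ Submodule.span K (Set.range fun i => fun c => ((b i c : K)))) ∧
      LinearIndependent (ResidueField O) (fun i => fun c => residue O (b i c)) := by
  intro d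
  induction d with
  | zero =>
    intro V hV
    refine ⟨Fin.elim0, fun i => i.elim0, ?_, linearIndependent_empty_type⟩
    rw [Submodule.finrank_eq_zero.mp hV]
    exact bot_le
  | succ d ih =>
    intro V hV
    -- pick a nonzero vector
    have hVbot : V ≠ ⊥ := by
      intro h
      rw [h] at hV
      simp at hV
    obtain ⟨v₀, hv₀V, hv₀⟩ := Submodule.exists_mem_ne_zero_of_ne_bot hVbot
    obtain ⟨c₀, hc₀⟩ : ∃ c, v₀ c ≠ 0 := by
      by_contra hc
      push_neg at hc
      exact hv₀ (funext hc)
    have : Nonempty (Fin n) := ⟨c₀⟩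
    obtain ⟨j, hj⟩ := exists_dominant O v₀
    have hvj0 : v₀ j ≠ 0 := by
      intro h0
      apply (Valuation.ne_zero_iff O.valuation).2 hc₀
      exact le_antisymm (h0 ▸ hj c₀ |>.trans_eq (by rw [map_zero])) zero_le'
    set v : Fin n → K := (v₀ j)⁻¹ • v₀ with hv
    have hvV : v ∈ V := V.smul_mem _ hv₀V
    have hvO : ∀ c, v c ∈ O := fun c => div_mem' O (hj c) hvj0
    have hvj : v j = 1 := by
      simp only [hv, Pi.smul_apply, smul_eq_mul]
      exact inv_mul_cancel₀ hvj0
    -- the hyperplane section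
    set V' : Submodule K (Fin n → K) := V ⊓ LinearMap.ker (LinearMap.proj j) with hV'
    have hV'rank : Module.finrank K V' = d := by
      set f : V →ₗ[K] K := (LinearMap.proj j).comp V.subtype with hf
      have hker : LinearMap.ker f = Submodule.comap V.subtype (LinearMap.ker (LinearMap.proj j)) := by
        rw [hf, LinearMap.ker_comp]
      have hrange : LinearMap.range f = ⊤ := by
        rw [LinearMap.range_eq_top]
        intro c
        refine ⟨⟨c • v, V.smul_mem _ hvV⟩, ?_⟩
        simp [hf, hvj]
      have h1 : Module.finrank K (LinearMap.range f) = 1 := by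
        rw [hrange]
        simpa using Module.finrank_self K
      have := LinearMap.finrank_range_add_finrank_ker f
      rw [h1, hV] at this
      have hkerrank : Module.finrank K (LinearMap.ker f) = d := by omega
      have : V' = Submodule.map V.subtype (LinearMap.ker f) := by
        rw [hker, Submodule.map_comap_subtype]
      rw [this, Submodule.finrank_map_subtype_eq]
      exact hkerrank
    obtain ⟨b', hmem', hspan', hli'⟩ := ih V' hV'rank
    have hb'V : ∀ i, (fun c => ((b' i c : K))) ∈ V := fun i => (hmem' i).1
    have hb'j : ∀ i, b' i j = 0 := by
      intro i
      have h2 := (Submodule.mem_inf.1 (hmem' i)).2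
      rw [LinearMap.mem_ker] at h2
      simp only [LinearMap.proj_apply] at h2
      simpa using h2
    set bb : Fin (d+1) → (Fin n → O) := Fin.cons (fun c => ⟨v c, hvO c⟩) b' with hbb
    refine ⟨bb, ?_, ?_, ?_⟩
    · intro i
      refine Fin.cases ?_ ?_ i
      · simpa [hbb] using hvV
      · intro i
        simpa [hbb] using hb'V i
    · -- spanning
      intro w hw
      have hsub : Set.range (fun i => fun c => ((b' i c : K))) ⊆
          Set.range (fun i => fun c => ((bb i c : K))) := by
        rintro _ ⟨i, rfl⟩
        exact ⟨i.succ, by simp [hbb]⟩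
      have hvmem : v ∈ Submodule.span K
          (Set.range fun i => fun c => ((bb i c : K))) := by
        apply Submodule.subset_span
        exact ⟨0, by simp [hbb]⟩
      have hw' : w - w j • v ∈ V' := by
        refine Submodule.mem_inf.2 ⟨V.sub_mem hw (V.smul_mem _ hvV), ?_⟩
        rw [LinearMap.mem_ker]
        simp [LinearMap.proj_apply, hvj]
      have := Submodule.span_mono hsub (hspan' hw')
      have hfinal := Submodule.add_mem _ this (Submodule.smul_mem _ (w j) hvmem)
      simpa using hfinal
    · -- linear independence
      have heq : (fun i => fun c => residue O (bb i c)) =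
          Fin.cons (fun c => residue O (⟨v c, hvO c⟩ : O)) (fun i => fun c => residue O (b' i c)) := by
        funext i
        refine Fin.cases ?_ ?_ i <;> simp [hbb]
      rw [heq, linearIndependent_fin_cons]
      refine ⟨hli', ?_⟩
      intro hmem
      have hker : Submodule.span (ResidueField O)
          (Set.range fun i => fun c => residue O (b' i c)) ≤
          LinearMap.ker (LinearMap.proj (R := ResidueField O) (φ := fun _ : Fin n => ResidueField O) j) := by
        rw [Submodule.span_le]
        rintro _ ⟨i, rfl⟩
        rw [SetLike.mem_coe, LinearMap.mem_ker]
        simp [LinearMap.proj_apply, hb'j i]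
      have := hker hmem
      rw [LinearMap.mem_ker] at this
      have h1 : residue O (⟨v j, hvO j⟩ : O) = 0 := this
      have : (⟨v j, hvO j⟩ : O) = 1 := Subtype.ext (by simpa using hvj)
      rw [this, map_one] at h1
      exact one_ne_zero h1

end Adapt

section Infl

variable {K : Type*} [Field K] (O : ValuationSubring K)

private lemma inflator_eq {n d : ℕ} (V : Submodule K (Fin n → K)) (b : Fin d → (Fin n → O))
    (hmem : ∀ i, (fun c => ((b i c : K))) ∈ V)
    (hspan : V ≤ Submodule.span K (Set.range fun i => fun c => ((b i c : K))))
    (hli : LinearIndependent (ResidueField O) (fun i => fun c => residue O (b i c))) :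
    valInflator O n V =
      Submodule.span (ResidueField O) (Set.range fun i => fun c => residue O (b i c)) := by
  apply le_antisymm
  · rw [valInflator, Submodule.span_le]
    rintro w ⟨x, hxV, rfl⟩
    obtain ⟨a, ha⟩ := (Submodule.mem_span_range_iff_exists_fun K).1 (hspan hxV)
    have hax : ∀ c, ∑ i, a i * (b i c : K) = (x c : K) := by
      intro c
      have := congrFun ha c
      simpa [Finset.sum_apply] using this
    have haO : ∀ i, a i ∈ O := coeff_mem O b hli a (fun c => by
      rw [hax c]; exact SetLike.coe_mem _)
    have hxa : ∀ c, x c = ∑ i, (⟨a i, haO i⟩ : O) * b i c := by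
      intro c
      apply Subtype.ext
      push_cast
      rw [← hax c]
    rw [SetLike.mem_coe]
    have : (fun c => residue O (x c)) =
        ∑ i, residue O (⟨a i, haO i⟩ : O) • (fun c => residue O (b i c)) := by
      funext c
      simp only [Finset.sum_apply, Pi.smul_apply, smul_eq_mul, hxa c]
      simp only [← map_mul, ← map_sum]
    rw [this]
    exact Submodule.sum_smul_mem _ _ (fun i _ => Submodule.subset_span ⟨i, rfl⟩)
  · rw [Submodule.span_le]
    rintro _ ⟨i, rfl⟩
    exact Submodule.subset_span ⟨b i, hmem i, rfl⟩

end Infl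

section Main
open Matrix

variable {K : Type*} [Field K] (O : ValuationSubring K)

private lemma coe_mulVec {n : ℕ} (M : Matrix (Fin n) (Fin n) O) (x : Fin n → O) :
    (fun i => ((M *ᵥ x) i : K)) = (M.map fun t => (t : K)) *ᵥ (fun i => ((x i : K))) := by
  funext i
  exact RingHom.map_mulVec O.subtype M x i

private lemma res_mulVec {n : ℕ} (M : Matrix (Fin n) (Fin n) O) (x : Fin n → O) :
    (fun i => residue O ((M *ᵥ x) i)) = (M.map (residue O)) *ᵥ (fun i => residue O (x i)) := by
  funext i
  exact RingHom.map_mulVec (residue O) M x i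

private def inlL (R : Type*) [Semiring R] (n m : ℕ) : (Fin n → R) →ₗ[R] (Fin (n + m) → R) where
  toFun x := Fin.addCases x (fun _ => 0)
  map_add' x y := by
    funext i
    induction i using Fin.addCases with
    | left i => simp
    | right i => simp
  map_smul' c x := by
    funext i
    induction i using Fin.addCases with
    | left i => simp
    | right i => simp

private def inrL (R : Type*) [Semiring R] (n m : ℕ) : (Fin m → R) →ₗ[R] (Fin (n + m) → R) where
  toFun x := Fin.addCases (fun _ => 0) x
  map_add' x y := by
    funext i
    induction i using Fin.addCases with
    | left i => simp
    | right i => simp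
  map_smul' c x := by
    funext i
    induction i using Fin.addCases with
    | left i => simp
    | right i => simp

theorem valInflator_is_one_inflator' {K : Type*} [Field K] (O : ValuationSubring K) :
    (∀ (n : ℕ) (V W : Submodule K (Fin n → K)), V ≤ W →
      valInflator O n V ≤ valInflator O n W) ∧
    (∀ (n m : ℕ) (V : Submodule K (Fin n → K)) (W : Submodule K (Fin m → K)),
      valInflator O (n + m) (V.finDSum W) =
        (valInflator O n V).finDSum (valInflator O m W)) ∧
    (∀ (n : ℕ) (μ : Matrix (Fin n) (Fin n) O), IsUnit μ →
      ∀ V : Submodule K (Fin n → K),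
        valInflator O n (V.map (Matrix.mulVecLin (μ.map fun t => (t : K)))) =
          (valInflator O n V).map
            (Matrix.mulVecLin (μ.map (IsLocalRing.residue O)))) ∧
    (∀ (n : ℕ) (V : Submodule K (Fin n → K)),
      Module.finrank (IsLocalRing.ResidueField O) (valInflator O n V) =
        Module.finrank K V) := by
  refine ⟨?_, ?_, ?_, ?_⟩
  · -- monotone
    intro n V W hVW
    apply Submodule.span_mono
    rintro w ⟨x, hx, rfl⟩
    exact ⟨x, hVW hx, rfl⟩
  · -- direct sums
    intro n m V W
    apply le_antisymm
    · rw [valInflator, Submodule.span_le]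
      rintro w ⟨x, hx, rfl⟩
      exact ⟨Submodule.subset_span ⟨fun i => x (Fin.castAdd m i), hx.1, rfl⟩,
        Submodule.subset_span ⟨fun j => x (Fin.natAdd n j), hx.2, rfl⟩⟩
    · intro x hx
      have hxsum : x = inlL (ResidueField O) n m (fun i => x (Fin.castAdd m i)) +
          inrL (ResidueField O) n m (fun j => x (Fin.natAdd n j)) := by
        funext i
        induction i using Fin.addCases with
        | left i => simp [inlL, inrL]
        | right i => simp [inlL, inrL]
      have h1 : Submodule.map (inlL (ResidueField O) n m) (valInflator O n V) ≤
          valInflator O (n + m) (V.finDSum W) := by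
        rw [valInflator, Submodule.map_span, Submodule.span_le]
        rintro _ ⟨_, ⟨y, hyV, rfl⟩, rfl⟩
        apply Submodule.subset_span
        refine ⟨Fin.addCases y (fun _ => 0), ⟨?_, ?_⟩, ?_⟩
        · have : (fun i => ((Fin.addCases y (fun _ => (0 : O)) (Fin.castAdd m i) : O) : K)) =
              fun i => ((y i : O) : K) := by
            funext i; rw [Fin.addCases_left]
          rw [this]; exact hyV
        · have : (fun j => ((Fin.addCases y (fun _ => (0 : O)) (Fin.natAdd n j) : O) : K)) =
              (0 : Fin m → K) := by
            funext j; rw [Fin.addCases_right]; simp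
          rw [this]; exact W.zero_mem
        · funext i
          induction i using Fin.addCases with
          | left i => simp [inlL]
          | right i => simp [inlL]
      have h2 : Submodule.map (inrL (ResidueField O) n m) (valInflator O m W) ≤
          valInflator O (n + m) (V.finDSum W) := by
        rw [valInflator, Submodule.map_span, Submodule.span_le]
        rintro _ ⟨_, ⟨y, hyW, rfl⟩, rfl⟩
        apply Submodule.subset_span
        refine ⟨Fin.addCases (fun _ => 0) y, ⟨?_, ?_⟩, ?_⟩
        · have : (fun i => ((Fin.addCases (fun _ => (0 : O)) y (Fin.castAdd m i) : O) : K)) =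
              (0 : Fin n → K) := by
            funext i; rw [Fin.addCases_left]; simp
          rw [this]; exact V.zero_mem
        · have : (fun j => ((Fin.addCases (fun _ => (0 : O)) y (Fin.natAdd n j) : O) : K)) =
              fun j => ((y j : O) : K) := by
            funext j; rw [Fin.addCases_right]
          rw [this]; exact hyW
        · funext i
          induction i using Fin.addCases with
          | left i => simp [inrL]
          | right i => simp [inrL]
      rw [hxsum]
      exact Submodule.add_mem _ (h1 ⟨_, hx.1, rfl⟩) (h2 ⟨_, hx.2, rfl⟩)
  · -- GL_n(O)-equivariance
    intro n μ hμ V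
    obtain ⟨u, rfl⟩ := hμ
    set μ : Matrix (Fin n) (Fin n) O := (u : Matrix (Fin n) (Fin n) O) with hμdef
    set ν : Matrix (Fin n) (Fin n) O := ((u⁻¹ : _) : Matrix (Fin n) (Fin n) O) with hνdef
    have hμν : μ * ν = 1 := u.mul_inv
    have hνμ : ν * μ = 1 := u.inv_mul
    have hcoe : (fun t : O => (t : K)) = ⇑O.subtype := rfl
    have key : ∀ A B : Matrix (Fin n) (Fin n) O, A * B = 1 →
        (A.map fun t => ((t : O) : K)) * (B.map fun t => ((t : O) : K)) = 1 := by
      intro A B hAB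
      rw [hcoe, ← Matrix.map_mul, hAB]
      ext i j
      simp [Matrix.one_apply, apply_ite]
    have hmapK : (μ.map fun t => ((t : O) : K)) * (ν.map fun t => ((t : O) : K)) = 1 :=
      key μ ν hμν
    apply le_antisymm
    · rw [valInflator, Submodule.span_le]
      rintro w ⟨x, hxV, rfl⟩
      obtain ⟨y, hyV, hy⟩ := hxV
      rw [SetLike.mem_coe, Submodule.mem_map]
      refine ⟨fun i => residue O ((ν *ᵥ x) i), ?_, ?_⟩
      · apply Submodule.subset_span
        refine ⟨ν *ᵥ x, ?_, rfl⟩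
        rw [coe_mulVec O]
        have : (fun i => ((x i : O) : K)) = (μ.map fun t => ((t : O) : K)) *ᵥ y := by
          rw [← hy]; rfl
        rw [this, Matrix.mulVec_mulVec]
        rw [key ν μ hνμ, Matrix.one_mulVec]
        exact hyV
      · rw [Matrix.mulVecLin_apply, ← res_mulVec O, Matrix.mulVec_mulVec, hμν,
          Matrix.one_mulVec]
    · rw [valInflator, Submodule.map_span, Submodule.span_le]
      rintro _ ⟨_, ⟨x, hxV, rfl⟩, rfl⟩
      apply Submodule.subset_span
      refine ⟨μ *ᵥ x, ?_, ?_⟩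
      · rw [coe_mulVec O]
        exact ⟨fun i => ((x i : O) : K), hxV, rfl⟩
      · rw [Matrix.mulVecLin_apply, ← res_mulVec O]
  · -- dimension
    intro n V
    obtain ⟨b, hmem, hspan, hli⟩ := exists_adapted O n (Module.finrank K V) V rfl
    rw [inflator_eq O V b hmem hspan hli, finrank_span_eq_card hli, Fintype.card_fin]

end Main

/-- The family `ς_n(V) = ((V ∩ O^n) + 𝔪^n)/𝔪^n` attached to a valuation subring `O`
of `K` with residue field `k` is a 1-inflator: it is inclusion-preserving, compatible
with direct sums, `GL_n(O)`-equivariant (with the matrix acting on the residue side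
through its entrywise residue), and preserves dimensions. -/
theorem valInflator_is_one_inflator {K : Type*} [Field K] (O : ValuationSubring K) :
    (∀ (n : ℕ) (V W : Submodule K (Fin n → K)), V ≤ W →
      valInflator O n V ≤ valInflator O n W) ∧
    (∀ (n m : ℕ) (V : Submodule K (Fin n → K)) (W : Submodule K (Fin m → K)),
      valInflator O (n + m) (V.finDSum W) =
        (valInflator O n V).finDSum (valInflator O m W)) ∧
    (∀ (n : ℕ) (μ : Matrix (Fin n) (Fin n) O), IsUnit μ →
      ∀ V : Submodule K (Fin n → K),
        valInflator O n (V.map (Matrix.mulVecLin (μ.map fun t => (t : K)))) =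
          (valInflator O n V).map
            (Matrix.mulVecLin (μ.map (IsLocalRing.residue O)))) ∧
    (∀ (n : ℕ) (V : Submodule K (Fin n → K)),
      Module.finrank (IsLocalRing.ResidueField O) (valInflator O n V) =
        Module.finrank K V) := by
  exact valInflator_is_one_inflator' O
end
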